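/- arXiv:1511.02036 — 4 statements merged into one kernel-verified Lean document; each statement's English description precedes it below -/
import Mathlib

section
/- Let 1 < p ≤ ∞, m ∈ ℕ_0 and k ∈ ℕ with k > mp/(p−1) + 1 (interpreted as k > m + 1 when p = ∞). Let φ ∈ C_0^k(ℝ) satisfy supp(φ) ⊆ [0,1], φ(t) > 0 on (0,1), and suppose φ^{(k)} has only finitely many zeros in [0,1]. Then for every n with 0 ≤ n ≤ m there exists a constant C > 0 such that |φ^{(n)}(t)| ≤ C |φ(t)|^{1/p} for all t ∈ [0,1] (with |φ(t)|^{1/p} interpreted as 1 when p = ∞). -/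
open MeasureTheory Real Function Set Topology Filter
open scoped ENNReal NNReal BigOperators

noncomputable section

namespace DQB

/-- iterated derivatives vanish left of the support -/
lemma iter_zero_of_lt (φ : ℝ → ℝ) (hsupp : tsupport φ ⊆ Set.Icc 0 1) (j : ℕ) :
    ∀ x < (0:ℝ), iteratedDeriv j φ x = 0 := by
  induction j with
  | zero =>
    intro x hx
    simp only [iteratedDeriv_zero]
    apply image_eq_zero_of_notMem_tsupport
    intro hmem
    exact absurd (hsupp hmem).1 (not_le.mpr hx)
  | succ j ih =>
    intro x hx
    rw [iteratedDeriv_succ]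
    have hev : iteratedDeriv j φ =ᶠ[𝓝 x] (fun _ => (0:ℝ)) := by
      filter_upwards [Iio_mem_nhds hx] with y hy using ih y hy
    rw [hev.deriv_eq, deriv_const]

lemma iter_zero_of_gt (φ : ℝ → ℝ) (hsupp : tsupport φ ⊆ Set.Icc 0 1) (j : ℕ) :
    ∀ x > (1:ℝ), iteratedDeriv j φ x = 0 := by
  induction j with
  | zero =>
    intro x hx
    simp only [iteratedDeriv_zero]
    apply image_eq_zero_of_notMem_tsupport
    intro hmem
    exact absurd (hsupp hmem).2 (not_le.mpr hx)
  | succ j ih =>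
    intro x hx
    rw [iteratedDeriv_succ]
    have hev : iteratedDeriv j φ =ᶠ[𝓝 x] (fun _ => (0:ℝ)) := by
      filter_upwards [Ioi_mem_nhds hx] with y hy using ih y hy
    rw [hev.deriv_eq, deriv_const]

lemma iter_zero_at_zero {k : ℕ} (φ : ℝ → ℝ) (hφ : ContDiff ℝ k φ)
    (hsupp : tsupport φ ⊆ Set.Icc 0 1) {j : ℕ} (hj : j ≤ k) :
    iteratedDeriv j φ 0 = 0 := by
  have hc : Continuous (iteratedDeriv j φ) :=
    hφ.continuous_iteratedDeriv j (by exact_mod_cast hj)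
  have h1 : Tendsto (iteratedDeriv j φ) (𝓝[<] (0:ℝ)) (𝓝 (iteratedDeriv j φ 0)) :=
    (hc.tendsto 0).mono_left nhdsWithin_le_nhds
  have h2 : Tendsto (iteratedDeriv j φ) (𝓝[<] (0:ℝ)) (𝓝 0) := by
    apply Tendsto.congr' _ tendsto_const_nhds
    filter_upwards [self_mem_nhdsWithin] with y hy
    exact (iter_zero_of_lt φ hsupp j y hy).symm
  exact tendsto_nhds_unique h1 h2

lemma iter_zero_at_one {k : ℕ} (φ : ℝ → ℝ) (hφ : ContDiff ℝ k φ)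
    (hsupp : tsupport φ ⊆ Set.Icc 0 1) {j : ℕ} (hj : j ≤ k) :
    iteratedDeriv j φ 1 = 0 := by
  have hc : Continuous (iteratedDeriv j φ) :=
    hφ.continuous_iteratedDeriv j (by exact_mod_cast hj)
  have h1 : Tendsto (iteratedDeriv j φ) (𝓝[>] (1:ℝ)) (𝓝 (iteratedDeriv j φ 1)) :=
    (hc.tendsto 1).mono_left nhdsWithin_le_nhds
  have h2 : Tendsto (iteratedDeriv j φ) (𝓝[>] (1:ℝ)) (𝓝 0) := by
    apply Tendsto.congr' _ tendsto_const_nhds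
    filter_upwards [self_mem_nhdsWithin] with y hy
    exact (iter_zero_of_gt φ hsupp j y hy).symm
  exact tendsto_nhds_unique h1 h2

lemma global_bound {k : ℕ} (φ : ℝ → ℝ) (hφ : ContDiff ℝ k φ)
    (hsupp : tsupport φ ⊆ Set.Icc 0 1) {j : ℕ} (hj : j ≤ k) :
    ∃ M : ℝ, 1 ≤ M ∧ ∀ x : ℝ, |iteratedDeriv j φ x| ≤ M := by
  have hc : Continuous (iteratedDeriv j φ) :=
    hφ.continuous_iteratedDeriv j (by exact_mod_cast hj)
  obtain ⟨C, hC⟩ := (isCompact_Icc (a := (0:ℝ)) (b := 1)).exists_bound_of_continuousOn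
    hc.continuousOn
  refine ⟨max C 1, le_max_right _ _, fun x => ?_⟩
  by_cases hx : x ∈ Set.Icc (0:ℝ) 1
  · exact le_trans (hC x hx) (le_max_left _ _)
  · rcases not_and_or.mp (Set.mem_Icc.not.mp hx) with h | h
    · rw [iter_zero_of_lt φ hsupp j x (not_le.mp h)]
      simp
    · rw [iter_zero_of_gt φ hsupp j x (not_le.mp h)]
      simp

lemma mvt_step {k : ℕ} (φ : ℝ → ℝ) (hφ : ContDiff ℝ k φ) {j : ℕ} (hj : j < k)
    {a b : ℝ} (hab : a < b) :
    ∃ c ∈ Set.Ioo a b,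
      iteratedDeriv j φ b - iteratedDeriv j φ a = (b - a) * iteratedDeriv (j+1) φ c := by
  have hd : Differentiable ℝ (iteratedDeriv j φ) :=
    hφ.differentiable_iteratedDeriv j (by exact_mod_cast hj)
  obtain ⟨c, hc, hceq⟩ := exists_deriv_eq_slope (iteratedDeriv j φ) hab
    hd.continuous.continuousOn hd.differentiableOn
  refine ⟨c, hc, ?_⟩
  have : iteratedDeriv (j+1) φ c = deriv (iteratedDeriv j φ) c := by
    rw [iteratedDeriv_succ]
  rw [this, hceq, mul_div_assoc']
  rw [mul_comm, mul_div_assoc, div_self (sub_ne_zero.mpr hab.ne'), mul_one]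

lemma mono_step {k : ℕ} (φ : ℝ → ℝ) (hφ : ContDiff ℝ k φ) {j : ℕ} (hj : j < k)
    {δ : ℝ} (hδ0 : 0 < δ)
    (hnn : ∀ t ∈ Set.Ioo (0:ℝ) δ, 0 ≤ iteratedDeriv (j+1) φ t) :
    MonotoneOn (iteratedDeriv j φ) (Set.Icc 0 δ) := by
  have hd : Differentiable ℝ (iteratedDeriv j φ) :=
    hφ.differentiable_iteratedDeriv j (by exact_mod_cast hj)
  apply monotoneOn_of_deriv_nonneg (convex_Icc 0 δ) hd.continuous.continuousOn
    (hd.differentiableOn.mono interior_subset)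
  intro x hx
  rw [interior_Icc] at hx
  rw [show deriv (iteratedDeriv j φ) x = iteratedDeriv (j+1) φ x from
    (congrFun iteratedDeriv_succ x).symm]
  exact hnn x hx

/-- downward chain of nonnegativity -/
lemma chain_nonneg {k : ℕ} (φ : ℝ → ℝ) (hφ : ContDiff ℝ k φ)
    (hsupp : tsupport φ ⊆ Set.Icc 0 1) {δ : ℝ} (hδ0 : 0 < δ)
    (hknn : ∀ t ∈ Set.Ioo (0:ℝ) δ, 0 ≤ iteratedDeriv k φ t) :
    ∀ j ≤ k, ((j < k → MonotoneOn (iteratedDeriv j φ) (Set.Icc 0 δ)) ∧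
      ∀ t ∈ Set.Ioo (0:ℝ) δ, 0 ≤ iteratedDeriv j φ t) := by
  have key : ∀ d : ℕ, ∀ t ∈ Set.Ioo (0:ℝ) δ, 0 ≤ iteratedDeriv (k - d) φ t := by
    intro d
    induction d with
    | zero => simpa using hknn
    | succ d ih =>
      by_cases hd : d < k
      · have hjk : k - (d+1) < k := by omega
        have hsucc : k - (d+1) + 1 = k - d := by omega
        have hmono : MonotoneOn (iteratedDeriv (k - (d+1)) φ) (Set.Icc 0 δ) := by
          apply mono_step φ hφ hjk hδ0
          rw [hsucc]; exact ih
        intro t ht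
        have h0 : iteratedDeriv (k - (d+1)) φ 0 = 0 :=
          iter_zero_at_zero φ hφ hsupp (by omega)
        have := hmono (Set.mem_Icc.mpr ⟨le_refl 0, hδ0.le⟩)
          (Set.mem_Icc.mpr ⟨ht.1.le, ht.2.le⟩) ht.1.le
        rw [h0] at this
        exact this
      · have : k - (d+1) = k - d := by omega
        rw [this]; exact ih
  intro j hj
  constructor
  · intro hjk
    apply mono_step φ hφ hjk hδ0
    have := key (k - (j+1))
    have hh : k - (k - (j+1)) = j + 1 := by omega
    rwa [hh] at this
  · have := key (k - j)
    have hh : k - (k - j) = j := by omega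
    rwa [hh] at this

/-- downward chain of strict positivity -/
lemma chain_pos {k : ℕ} (φ : ℝ → ℝ) (hφ : ContDiff ℝ k φ)
    (hsupp : tsupport φ ⊆ Set.Icc 0 1) {δ : ℝ} (hδ0 : 0 < δ)
    (hkpos : ∀ t ∈ Set.Ioo (0:ℝ) δ, 0 < iteratedDeriv k φ t) :
    ∀ j ≤ k, ∀ t ∈ Set.Ioo (0:ℝ) δ, 0 < iteratedDeriv j φ t := by
  have hnn := chain_nonneg φ hφ hsupp hδ0 (fun t ht => (hkpos t ht).le)
  have key : ∀ d : ℕ, ∀ t ∈ Set.Ioo (0:ℝ) δ, 0 < iteratedDeriv (k - d) φ t := by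
    intro d
    induction d with
    | zero => simpa using hkpos
    | succ d ih =>
      by_cases hd : d < k
      · have hjk : k - (d+1) < k := by omega
        have hsucc : k - (d+1) + 1 = k - d := by omega
        intro t ht
        obtain ⟨c, hc, hceq⟩ := mvt_step φ hφ hjk (half_lt_self ht.1)
        have hc' : c ∈ Set.Ioo (0:ℝ) δ :=
          ⟨lt_trans (half_pos ht.1) hc.1, lt_trans hc.2 ht.2⟩
        have hpos : 0 < iteratedDeriv (k - (d+1) + 1) φ c := by
          rw [hsucc]; exact ih c hc'
        have hnn2 : 0 ≤ iteratedDeriv (k - (d+1)) φ (t/2) :=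
          ((hnn (k - (d+1)) (by omega)).2) (t/2) ⟨half_pos ht.1, lt_trans (half_lt_self ht.1) ht.2⟩
        nlinarith [hceq, hc.1, hc.2, ht.1]
      · have : k - (d+1) = k - d := by omega
        rw [this]; exact ih
  intro j hj
  have := key (k - j)
  have hh : k - (k - j) = j := by omega
  rwa [hh] at this

/-- the key Glaeser-type step inequality -/
lemma step_ineq {k : ℕ} (φ : ℝ → ℝ) (hφ : ContDiff ℝ k φ) {i : ℕ} (hik : i + 2 ≤ k)
    {t h B : ℝ} (h0 : 0 < h) (hNN : 0 ≤ iteratedDeriv i φ (t - h)) (hB0 : 0 ≤ B)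
    (hB : ∀ s ∈ Set.Ioo (t-h) t, iteratedDeriv (i+2) φ s ≤ B) :
    iteratedDeriv (i+1) φ t ≤ iteratedDeriv i φ t / h + h * B := by
  have hth : t - h < t := by linarith
  obtain ⟨c, hc, hceq⟩ := mvt_step φ hφ (show i < k by omega) hth
  obtain ⟨c₂, hc₂, hceq₂⟩ := mvt_step φ hφ (show i + 1 < k by omega) hc.2
  have hc₂' : c₂ ∈ Set.Ioo (t-h) t := ⟨lt_trans hc.1 hc₂.1, hc₂.2⟩
  have hBc := hB c₂ hc₂'
  have h1 : iteratedDeriv (i+1) φ c = (iteratedDeriv i φ t - iteratedDeriv i φ (t-h)) / h := by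
    rw [hceq]
    have : t - (t - h) = h := by ring
    rw [this]
    field_simp
  have h2 : iteratedDeriv (i+1) φ t
      = iteratedDeriv (i+1) φ c + (t - c) * iteratedDeriv (i+2) φ c₂ := by
    linarith [hceq₂]
  rw [h2, h1]
  have htc : 0 < t - c := by linarith [hc.2]
  have htch : t - c ≤ h := by linarith [hc.1]
  have e1 : (iteratedDeriv i φ t - iteratedDeriv i φ (t-h)) / h ≤ iteratedDeriv i φ t / h :=
    (div_le_div_iff_of_pos_right h0).mpr (by linarith)
  have e2 : (t - c) * iteratedDeriv (i+2) φ c₂ ≤ h * B :=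
    le_trans (mul_le_mul_of_nonneg_left hBc htc.le) (mul_le_mul_of_nonneg_right htch hB0)
  linarith

/-- from the family of `h`-inequalities, logarithmic convexity -/
lemma log_convex_step {x y z : ℝ} (hx : 0 < x) (hy : 0 < y) (hz : 0 < z)
    (hf : ∀ h : ℝ, 0 < h → y ≤ x / h + h * z) :
    2 * Real.log y ≤ Real.log x + Real.log z + 2 * Real.log 2 := by
  set h₀ := Real.exp ((Real.log x - Real.log z) / 2) with hh₀
  have hh₀pos : 0 < h₀ := Real.exp_pos _
  have key := hf h₀ hh₀pos
  have e1 : Real.exp ((Real.log x + Real.log z) / 2) = x / h₀ := by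
    rw [show (Real.log x + Real.log z) / 2
        = Real.log x - (Real.log x - Real.log z) / 2 by ring,
      Real.exp_sub, Real.exp_log hx, hh₀]
  have e2 : Real.exp ((Real.log x + Real.log z) / 2) = h₀ * z := by
    rw [show (Real.log x + Real.log z) / 2
        = (Real.log x - Real.log z) / 2 + Real.log z by ring,
      Real.exp_add, Real.exp_log hz, hh₀]
  rw [← e1, ← e2] at key
  have key2 : y ≤ 2 * Real.exp ((Real.log x + Real.log z) / 2) := by linarith
  have := Real.log_le_log hy key2
  rw [Real.log_mul (by norm_num) (Real.exp_ne_zero _), Real.log_exp] at this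
  linarith

/-- discrete convexity: chord bound -/
lemma discrete_conv (k : ℕ) (c : ℕ → ℝ)
    (hc : ∀ j : ℕ, j + 2 ≤ k → 2 * c (j+1) ≤ c j + c (j+2)) :
    ∀ n ≤ k, (k:ℝ) * c n ≤ ((k:ℝ) - n) * c 0 + n * c k := by
  intro n hn
  rcases Nat.eq_zero_or_pos n with rfl | hn0
  · simp
  set d : ℕ → ℝ := fun j => c (j+1) - c j with hd
  have dstep : ∀ j : ℕ, j + 2 ≤ k → d j ≤ d (j+1) := by
    intro j hj
    have := hc j hj
    simp only [hd]
    linarith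
  have dmono' : ∀ j : ℕ, j + 1 ≤ k → ∀ i ≤ j, d i ≤ d j := by
    intro j
    induction j with
    | zero =>
      intro _ i hi
      rw [Nat.le_zero.mp hi]
    | succ j ih =>
      intro hjk i hi
      rcases Nat.lt_or_ge i (j+1) with h' | h'
      · exact le_trans (ih (by omega) i (by omega)) (dstep j (by omega))
      · have : i = j + 1 := by omega
        rw [this]
  have dmono : ∀ i j : ℕ, i ≤ j → j + 1 ≤ k → d i ≤ d j :=
    fun i j hij hjk => dmono' j hjk i hij
  have hsum : ∀ N : ℕ, (∑ j ∈ Finset.range N, d j) = c N - c 0 := by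
    intro N
    rw [hd]
    exact Finset.sum_range_sub c N
  have hsplit : (∑ j ∈ Finset.range n, d j) + (∑ j ∈ Finset.Ico n k, d j)
      = ∑ j ∈ Finset.range k, d j := by
    rw [Finset.range_eq_Ico, Finset.range_eq_Ico]
    exact Finset.sum_Ico_consecutive d (Nat.zero_le n) hn
  set v := d (n-1) with hv
  have h1 : (∑ j ∈ Finset.range n, d j) ≤ (n:ℝ) * v := by
    have := Finset.sum_le_card_nsmul (Finset.range n) d v (by
      intro j hj
      rw [Finset.mem_range] at hj
      exact dmono j (n-1) (by omega) (by omega))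
    simpa [nsmul_eq_mul] using this
  have h2 : (((k:ℝ) - n)) * v ≤ ∑ j ∈ Finset.Ico n k, d j := by
    have := Finset.card_nsmul_le_sum (Finset.Ico n k) d v (by
      intro j hj
      rw [Finset.mem_Ico] at hj
      exact dmono (n-1) j (by omega) (by omega))
    rw [Nat.card_Ico, nsmul_eq_mul, Nat.cast_sub hn] at this
    exact this
  have hSn := hsum n
  have hSk := hsum k
  have hkn : (0:ℝ) ≤ (k:ℝ) - n := by
    have : (n:ℝ) ≤ k := by exact_mod_cast hn
    linarith
  have hn0' : (0:ℝ) ≤ (n:ℝ) := Nat.cast_nonneg n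
  have hA : ((k:ℝ)-n) * (∑ j ∈ Finset.range n, d j) ≤ ((k:ℝ)-n) * ((n:ℝ)*v) :=
    mul_le_mul_of_nonneg_left h1 hkn
  have hB2 : (n:ℝ) * ((((k:ℝ)-n))*v) ≤ (n:ℝ) * (∑ j ∈ Finset.Ico n k, d j) :=
    mul_le_mul_of_nonneg_left h2 hn0'
  nlinarith [hA, hB2, hSn, hSk, hsplit]

lemma rpow_lower {x B e e₁ : ℝ} (hx : 0 < x) (hxB : x ≤ B) (hB : 1 ≤ B)
    (he : 0 < e) (h1 : e ≤ e₁) (h2 : e₁ ≤ 1) : x ^ e₁ ≤ B * x ^ e := by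
  rcases le_or_gt x 1 with hx1 | hx1
  · calc x^e₁ ≤ x^e := Real.rpow_le_rpow_of_exponent_ge hx hx1 h1
      _ ≤ B * x^e := le_mul_of_one_le_left (Real.rpow_nonneg hx.le e) hB
  · have h3 : x ^ e₁ ≤ x ^ (1:ℝ) := Real.rpow_le_rpow_of_exponent_le hx1.le h2
    rw [Real.rpow_one] at h3
    have h4 : (1:ℝ) ≤ x ^ e := Real.one_le_rpow hx1.le he.le
    calc x^e₁ ≤ x := h3
      _ = x * 1 := (mul_one x).symm
      _ ≤ B * x^e := mul_le_mul hxB h4 zero_le_one (le_trans zero_le_one hB)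

lemma sign_const {f : ℝ → ℝ} (hf : Continuous f) {δ : ℝ} (hδ0 : 0 < δ)
    (hne : ∀ t ∈ Set.Ioo (0:ℝ) δ, f t ≠ 0) :
    (∀ t ∈ Set.Ioo (0:ℝ) δ, 0 < f t) ∨ (∀ t ∈ Set.Ioo (0:ℝ) δ, f t < 0) := by
  have ht₀ : δ/2 ∈ Set.Ioo (0:ℝ) δ := ⟨half_pos hδ0, half_lt_self hδ0⟩
  have key : ∀ g : ℝ → ℝ, Continuous g → (∀ t ∈ Set.Ioo (0:ℝ) δ, g t ≠ 0) →
      0 < g (δ/2) → ∀ t ∈ Set.Ioo (0:ℝ) δ, 0 < g t := by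
    intro g hg hgne hgpos t ht
    by_contra hle
    have hlt : g t < 0 := lt_of_le_of_ne (not_lt.mp hle) (hgne t ht)
    rcases lt_trichotomy t (δ/2) with h | h | h
    · have := intermediate_value_Ioo h.le hg.continuousOn
      have h0 : (0:ℝ) ∈ Set.Ioo (g t) (g (δ/2)) := ⟨hlt, hgpos⟩
      obtain ⟨c, hc, hceq⟩ := this h0
      exact hgne c ⟨lt_trans ht.1 hc.1, lt_trans hc.2 ht₀.2⟩ hceq
    · rw [h] at hlt; linarith
    · have := intermediate_value_Ioo' h.le hg.continuousOn
      have h0 : (0:ℝ) ∈ Set.Ioo (g t) (g (δ/2)) := ⟨hlt, hgpos⟩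
      obtain ⟨c, hc, hceq⟩ := this h0
      exact hgne c ⟨lt_trans ht₀.1 hc.1, lt_trans hc.2 ht.2⟩ hceq
  rcases lt_or_gt_of_ne (hne (δ/2) ht₀) with hneg | hpos
  · right
    intro t ht
    have := key (fun x => -f x) hf.neg (fun t ht h0 => hne t ht (by simpa using h0))
      (by simpa using hneg) t ht
    simpa using this
  · exact Or.inl (key f hf hne hpos)

/-- main near-zero estimate -/
lemma aux_left {k : ℕ} (φ : ℝ → ℝ) (hφ : ContDiff ℝ k φ) (hsupp : tsupport φ ⊆ Set.Icc 0 1)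
    (hpos : ∀ t ∈ Set.Ioo (0:ℝ) 1, 0 < φ t)
    (hzeros : {t ∈ Set.Icc (0:ℝ) 1 | iteratedDeriv k φ t = 0}.Finite)
    (n : ℕ) (hn : n + 2 ≤ k) {e : ℝ} (he : 0 < e) (hek : e ≤ ((k:ℝ) - n) / k) :
    ∃ δ : ℝ, 0 < δ ∧ δ ≤ 1/2 ∧ ∃ C : ℝ, 0 < C ∧
      ∀ t ∈ Set.Ioo (0:ℝ) δ, |iteratedDeriv n φ t| ≤ C * (φ t) ^ e := by
  have hk2 : 2 ≤ k := by omega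
  have hkR : (0:ℝ) < k := by positivity
  -- choose δ with no zeros of the k-th derivative in (0, δ)
  obtain ⟨δ, hδ0, hδhalf, hδne⟩ : ∃ δ : ℝ, 0 < δ ∧ δ ≤ 1/2 ∧
      ∀ t ∈ Set.Ioo (0:ℝ) δ, iteratedDeriv k φ t ≠ 0 := by
    have hfin : ({t ∈ Set.Icc (0:ℝ) 1 | iteratedDeriv k φ t = 0} ∩ Set.Ioi 0).Finite :=
      hzeros.inter_of_left _
    by_cases hne : ({t ∈ Set.Icc (0:ℝ) 1 | iteratedDeriv k φ t = 0} ∩ Set.Ioi 0).Nonempty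
    · obtain ⟨z, hz, hzmin⟩ := Set.exists_min_image _ id hfin hne
      have hz0 : 0 < z := hz.2
      refine ⟨min (z/2) (1/2), by positivity, min_le_right _ _, ?_⟩
      intro t ht htk
      have ht1 : t ∈ Set.Icc (0:ℝ) 1 := ⟨ht.1.le, by
        have := lt_of_lt_of_le ht.2 (min_le_right _ _)
        linarith⟩
      have htmem : t ∈ {t ∈ Set.Icc (0:ℝ) 1 | iteratedDeriv k φ t = 0} ∩ Set.Ioi 0 :=
        ⟨⟨ht1, htk⟩, ht.1⟩
      have := hzmin t htmem
      have := lt_of_lt_of_le ht.2 (min_le_left _ _)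
      simp only [id] at *
      linarith
    · refine ⟨1/2, by norm_num, le_refl _, ?_⟩
      intro t ht htk
      apply hne
      exact ⟨t, ⟨⟨ht.1.le, by linarith [ht.2]⟩, htk⟩, ht.1⟩
  have hδ1 : δ < 1 := lt_of_le_of_lt hδhalf (by norm_num)
  -- the k-th derivative is positive on (0, δ)
  have hkpos : ∀ t ∈ Set.Ioo (0:ℝ) δ, 0 < iteratedDeriv k φ t := by
    have hcont : Continuous (iteratedDeriv k φ) :=
      hφ.continuous_iteratedDeriv k (le_refl _)
    rcases sign_const hcont hδ0 hδne with h | h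
    · exact h
    · exfalso
      have hφneg : ContDiff ℝ k (fun x => -φ x) := hφ.neg
      have hsuppneg : tsupport (fun x => -φ x) ⊆ Set.Icc 0 1 := by
        have : tsupport (fun x => -φ x) = tsupport φ := by
          unfold tsupport
          congr 1
          ext x
          simp
        rwa [this]
      have hknn : ∀ t ∈ Set.Ioo (0:ℝ) δ, 0 ≤ iteratedDeriv k (fun x => -φ x) t := by
        intro t ht
        rw [iteratedDeriv_fun_neg]
        linarith [h t ht]
      have h0 := (chain_nonneg (fun x => -φ x) hφneg hsuppneg hδ0 hknn 0 (by omega)).2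
        (δ/2) ⟨half_pos hδ0, half_lt_self hδ0⟩
      simp only [iteratedDeriv_zero] at h0
      have := hpos (δ/2) ⟨half_pos hδ0, by linarith [half_lt_self hδ0]⟩
      linarith
  have hchain := chain_nonneg φ hφ hsupp hδ0 (fun t ht => (hkpos t ht).le)
  have hstrict := chain_pos φ hφ hsupp hδ0 hkpos
  obtain ⟨M, hM1, hM⟩ := global_bound φ hφ hsupp (le_refl k)
  obtain ⟨B, hB1, hB⟩ := global_bound φ hφ hsupp (Nat.zero_le k)
  have hBφ : ∀ x, |φ x| ≤ B := by
    intro x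
    have := hB x
    rwa [iteratedDeriv_zero] at this
  refine ⟨δ, hδ0, hδhalf, M * 2 ^ ((k:ℝ)^2) * B, by positivity, ?_⟩
  intro t ht
  set a : ℕ → ℝ := fun i => if i = k then M else iteratedDeriv i φ t with ha
  have hφt : 0 < φ t := hpos t ⟨ht.1, lt_trans ht.2 hδ1⟩
  have hapos : ∀ i ≤ k, 0 < a i := by
    intro i hi
    by_cases hik : i = k
    · simp only [ha, hik, if_pos rfl]
      linarith
    · simp only [ha, if_neg hik]
      exact hstrict i (by omega) t ht
  -- the h-family inequality
  have hstep : ∀ i : ℕ, i + 2 ≤ k → ∀ h : ℝ, 0 < h → a (i+1) ≤ a i / h + h * a (i+2) := by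
    intro i hik h h0
    have h1k : i + 1 ≠ k := by omega
    have h0k : i ≠ k := by omega
    simp only [ha, if_neg h1k, if_neg h0k]
    apply step_ineq φ hφ hik h0
    · -- 0 ≤ iteratedDeriv i φ (t - h)
      rcases lt_trichotomy (t - h) 0 with hh | hh | hh
      · rw [iter_zero_of_lt φ hsupp i _ hh]
      · rw [hh, iter_zero_at_zero φ hφ hsupp (by omega)]
      · exact (hchain i (by omega)).2 (t-h) ⟨hh, by linarith [ht.2]⟩
    · by_cases h2k : i + 2 = k
      · simp only [if_pos h2k]; linarith
      · simp only [if_neg h2k]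
        exact (hchain (i+2) (by omega)).2 t ht
    · intro s hs
      by_cases h2k : i + 2 = k
      · simp only [if_pos h2k]
        rw [h2k]
        exact le_trans (le_abs_self _) (hM s)
      · simp only [if_neg h2k]
        rcases lt_trichotomy s 0 with hh | hh | hh
        · rw [iter_zero_of_lt φ hsupp (i+2) _ hh]
          exact (hchain (i+2) (by omega)).2 t ht
        · rw [hh, iter_zero_at_zero φ hφ hsupp (by omega)]
          exact (hchain (i+2) (by omega)).2 t ht
        · exact (hchain (i+2) (by omega)).1 (by omega)
            ⟨hh.le, by linarith [hs.2, ht.2]⟩ ⟨ht.1.le, ht.2.le⟩ hs.2.le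
  -- logarithmic convexity
  set L := Real.log 2 with hL
  have hL0 : 0 ≤ L := Real.log_nonneg one_le_two
  set c : ℕ → ℝ := fun j => Real.log (a j) + (j:ℝ)^2 * L with hcdef
  have hcconv : ∀ j : ℕ, j + 2 ≤ k → 2 * c (j+1) ≤ c j + c (j+2) := by
    intro j hjk
    have hlog := log_convex_step (hapos j (by omega)) (hapos (j+1) (by omega))
      (hapos (j+2) (by omega)) (fun h h0 => hstep j hjk h h0)
    simp only [hcdef]
    push_cast
    have : ((j:ℝ)^2 + ((j:ℝ)+2)^2) = 2*((j:ℝ)+1)^2 + 2 := by ring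
    nlinarith [hlog]
  have hconv := discrete_conv k c hcconv n (by omega)
  -- unfold c at relevant points
  have hnk : n ≠ k := by omega
  have hck : c k = Real.log M + (k:ℝ)^2 * L := by
    simp [hcdef, ha]
  have hc0 : c 0 = Real.log (φ t) := by
    simp only [hcdef, ha, if_neg (show 0 ≠ k by omega)]
    rw [iteratedDeriv_zero]
    push_cast
    ring
  have hcn : c n = Real.log (iteratedDeriv n φ t) + (n:ℝ)^2 * L := by
    simp only [hcdef, ha, if_neg hnk]
  have hlogM : 0 ≤ Real.log M := Real.log_nonneg hM1
  have hnR : (n:ℝ) ≤ k := by exact_mod_cast (by omega : n ≤ k)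
  have hnR0 : (0:ℝ) ≤ n := Nat.cast_nonneg n
  -- target: k * log ψ_n ≤ k * (e₁ log φ + log M + k² L)
  set e₁ : ℝ := ((k:ℝ) - n) / k with he₁
  have hke₁ : (k:ℝ) * e₁ = (k:ℝ) - n := by
    rw [he₁, mul_div_assoc', mul_div_cancel_left₀ _ hkR.ne']
  have hmain : Real.log (iteratedDeriv n φ t)
      ≤ e₁ * Real.log (φ t) + Real.log M + (k:ℝ)^2 * L := by
    rw [← mul_le_mul_iff_right₀ hkR]
    have expand : (k:ℝ) * (e₁ * Real.log (φ t) + Real.log M + (k:ℝ)^2 * L)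
        = ((k:ℝ) - n) * Real.log (φ t) + (k:ℝ)*Real.log M + (k:ℝ)^3 * L := by
      rw [mul_add, mul_add, ← mul_assoc, hke₁]
      ring
    rw [expand]
    rw [hck, hc0, hcn] at hconv
    have t1 : (n:ℝ)*Real.log M ≤ (k:ℝ)*Real.log M := mul_le_mul_of_nonneg_right hnR hlogM
    have t2 : (n:ℝ)*((k:ℝ)^2*L) ≤ (k:ℝ)*((k:ℝ)^2*L) :=
      mul_le_mul_of_nonneg_right hnR (by positivity)
    have t3 : 0 ≤ (k:ℝ)*(n:ℝ)^2*L := by positivity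
    linarith [hconv, t1, t2, t3]
  -- exponentiate
  have hψpos : 0 < iteratedDeriv n φ t := hstrict n (by omega) t ht
  have habs : |iteratedDeriv n φ t| = iteratedDeriv n φ t := abs_of_pos hψpos
  rw [habs]
  have hexp : iteratedDeriv n φ t
      ≤ (φ t) ^ e₁ * M * 2 ^ ((k:ℝ)^2) := by
    have h1 : iteratedDeriv n φ t = Real.exp (Real.log (iteratedDeriv n φ t)) :=
      (Real.exp_log hψpos).symm
    rw [h1]
    have h2 := Real.exp_le_exp.mpr hmain
    apply le_trans h2
    rw [Real.exp_add, Real.exp_add, Real.exp_log (by linarith : (0:ℝ) < M)]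
    apply le_of_eq
    congr 1
    · congr 1
      rw [Real.rpow_def_of_pos hφt, mul_comm]
    · rw [Real.rpow_def_of_pos (by norm_num : (0:ℝ) < 2), mul_comm]
  have he₁1 : e₁ ≤ 1 := by
    rw [he₁, div_le_one hkR]
    linarith
  have hlower : (φ t) ^ e₁ ≤ B * (φ t) ^ e :=
    rpow_lower hφt (le_trans (le_abs_self _) (hBφ t)) hB1 he hek he₁1
  calc iteratedDeriv n φ t ≤ (φ t) ^ e₁ * M * 2 ^ ((k:ℝ)^2) := hexp
    _ ≤ (B * (φ t) ^ e) * M * 2 ^ ((k:ℝ)^2) := by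
        apply mul_le_mul_of_nonneg_right _ (by positivity)
        apply mul_le_mul_of_nonneg_right hlower (by linarith)
    _ = M * 2 ^ ((k:ℝ)^2) * B * (φ t) ^ e := by ring

lemma refl_deriv (φ : ℝ → ℝ) (j : ℕ) (x : ℝ) :
    iteratedDeriv j (fun y => φ (1 - y)) x = (-1:ℝ)^j * iteratedDeriv j φ (1 - x) := by
  have h1 : (fun y : ℝ => φ (1 - y)) = (fun y : ℝ => (fun z : ℝ => φ (1 + z)) (-y)) := by
    funext y
    ring_nf
  rw [h1, iteratedDeriv_comp_neg j (fun z : ℝ => φ (1 + z)) x]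
  rw [show iteratedDeriv j (fun z : ℝ => φ (1 + z)) (-x)
      = iteratedDeriv j φ (1 + -x) from congrFun (iteratedDeriv_comp_const_add j φ 1) (-x)]
  rw [show (1:ℝ) + -x = 1 - x by ring, smul_eq_mul]

lemma phi_nonneg {k : ℕ} (φ : ℝ → ℝ) (hφ : ContDiff ℝ k φ)
    (hsupp : tsupport φ ⊆ Set.Icc 0 1)
    (hpos : ∀ t ∈ Set.Ioo (0:ℝ) 1, 0 < φ t) :
    ∀ t ∈ Set.Icc (0:ℝ) 1, 0 ≤ φ t := by
  intro t ht
  rcases eq_or_lt_of_le ht.1 with h0 | h0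
  · have := iter_zero_at_zero φ hφ hsupp (Nat.zero_le k)
    rw [iteratedDeriv_zero] at this
    rw [← h0, this]
  rcases eq_or_lt_of_le ht.2 with h1 | h1
  · have := iter_zero_at_one φ hφ hsupp (Nat.zero_le k)
    rw [iteratedDeriv_zero] at this
    rw [h1, this]
  · exact (hpos t ⟨h0, h1⟩).le

end DQB

open DQB in
/-- Lemma (boundedness of quotients of derivatives of the kernel `φ`): for
`1 < p ≤ ∞`, `m ∈ ℕ₀` and `k > mp/(p-1) + 1` (`k > m + 1` when `p = ∞`), a
kernel `φ ∈ C_0^k(ℝ)` with `supp φ ⊆ [0,1]`, `φ > 0` on `(0,1)` and `φ^{(k)}`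
having only finitely many zeros in `[0,1]` satisfies
`|φ^{(n)}(t)| ≤ C |φ(t)|^{1/p}` on `[0,1]` for every `0 ≤ n ≤ m`. -/
theorem derivative_quotient_bound
    (p : ℝ≥0∞) (hp : 1 < p) (m k : ℕ)
    (hk : if p = ∞ then ((m : ℝ) + 1 < (k : ℝ))
          else ((m : ℝ) * p.toReal / (p.toReal - 1) + 1 < (k : ℝ)))
    (φ : ℝ → ℝ) (hφ : ContDiff ℝ k φ) (hsupp : tsupport φ ⊆ Set.Icc 0 1)
    (hpos : ∀ t ∈ Set.Ioo (0:ℝ) 1, 0 < φ t)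
    (hzeros : {t ∈ Set.Icc (0:ℝ) 1 | iteratedDeriv k φ t = 0}.Finite) :
    ∀ n : ℕ, n ≤ m → ∃ C : ℝ, 0 < C ∧ ∀ t ∈ Set.Icc (0:ℝ) 1,
      |iteratedDeriv n φ t| ≤ C * |φ t| ^ (1 / p.toReal) := by
  intro n hnm
  by_cases hptop : p = ∞
  · -- the case p = ∞ : exponent is 0, bound is just boundedness
    rw [if_pos hptop] at hk
    have hkm : m + 1 < k := by exact_mod_cast hk
    obtain ⟨Mn, hMn1, hMn⟩ := global_bound φ hφ hsupp (show n ≤ k by omega)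
    refine ⟨Mn, by linarith, fun t _ => ?_⟩
    rw [hptop]
    simp only [ENNReal.toReal_top, div_zero, Real.rpow_zero, mul_one]
    exact hMn t
  · rw [if_neg hptop] at hk
    set P := p.toReal with hP
    have hP1 : 1 < P := by
      rw [hP]
      have := (ENNReal.toReal_lt_toReal (by simp) hptop).mpr hp
      simpa using this
    have hP0 : 0 < P := by linarith
    have hP1' : 0 < P - 1 := by linarith
    have hmP : (m:ℝ) ≤ (m:ℝ) * P / (P - 1) := by
      rw [le_div_iff₀ hP1']
      have : (0:ℝ) ≤ m := Nat.cast_nonneg m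
      nlinarith
    have hkm : m + 2 ≤ k := by
      have : (m:ℝ) + 1 < k := by linarith
      have : m + 1 < k := by exact_mod_cast this
      omega
    have hkR : (0:ℝ) < k := by
      have : 0 < k := by omega
      exact_mod_cast this
    have hnR : (n:ℝ) ≤ m := by exact_mod_cast hnm
    set e : ℝ := 1 / P with he_def
    have he : 0 < e := by positivity
    have hek : e ≤ ((k:ℝ) - n) / k := by
      rw [he_def, div_le_div_iff₀ hP0 hkR]
      have hmul := (div_lt_iff₀ hP1').mp (show (m:ℝ) * P / (P-1) < (k:ℝ) - 1 by linarith)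
      nlinarith [hmul, hnR, hP1']
    have hnk : n + 2 ≤ k := by omega
    -- left bound
    obtain ⟨δ₁, hδ₁0, hδ₁h, C₁, hC₁0, hC₁⟩ := aux_left φ hφ hsupp hpos hzeros n hnk he hek
    -- reflected function
    set ψ : ℝ → ℝ := fun y => φ (1 - y) with hψdef
    have hψ : ContDiff ℝ k ψ := hφ.comp (contDiff_const.sub contDiff_id)
    have hψsupp : tsupport ψ ⊆ Set.Icc 0 1 := by
      apply closure_minimal _ isClosed_Icc
      intro x hx
      have : (1:ℝ) - x ∈ tsupport φ := subset_tsupport φ hx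
      have := hsupp this
      constructor <;> [linarith [this.2]; linarith [this.1]]
    have hψpos : ∀ t ∈ Set.Ioo (0:ℝ) 1, 0 < ψ t := by
      intro t ht
      exact hpos (1 - t) ⟨by linarith [ht.2], by linarith [ht.1]⟩
    have hψzeros : {t ∈ Set.Icc (0:ℝ) 1 | iteratedDeriv k ψ t = 0}.Finite := by
      apply Set.Finite.subset ((hzeros.image (fun s => 1 - s)))
      intro t ht
      have h1 : iteratedDeriv k ψ t = (-1:ℝ)^k * iteratedDeriv k φ (1 - t) :=
        refl_deriv φ k t
      have h2 : iteratedDeriv k φ (1 - t) = 0 := by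
        have := ht.2
        rw [h1] at this
        rcases mul_eq_zero.mp this with h | h
        · exact absurd h (by positivity)
        · exact h
      exact ⟨1 - t, ⟨⟨by linarith [ht.1.2], by linarith [ht.1.1]⟩, h2⟩, by ring⟩
    obtain ⟨δ₂, hδ₂0, hδ₂h, C₂, hC₂0, hC₂⟩ := aux_left ψ hψ hψsupp hψpos hψzeros n hnk he hek
    -- middle bound
    have hmidsub : Set.Icc (δ₁/2) (1 - δ₂/2) ⊆ Set.Ioo (0:ℝ) 1 := by
      intro x hx
      constructor
      · linarith [hx.1, half_pos hδ₁0]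
      · have : 0 < δ₂/2 := half_pos hδ₂0
        linarith [hx.2]
    have hmidne : (Set.Icc (δ₁/2) (1 - δ₂/2)).Nonempty := by
      rw [Set.nonempty_Icc]
      linarith [hδ₁h, hδ₂h]
    obtain ⟨x₀, hx₀mem, hx₀'⟩ := (isCompact_Icc (a := δ₁/2) (b := 1 - δ₂/2)).exists_isMinOn
      hmidne (hφ.continuous.continuousOn)
    have hx₀ : ∀ y ∈ Set.Icc (δ₁/2) (1 - δ₂/2), φ x₀ ≤ φ y := fun y hy => hx₀' hy
    set μ := φ x₀ with hμdef
    have hμ0 : 0 < μ := hpos x₀ (hmidsub hx₀mem)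
    obtain ⟨Mn, hMn1, hMn⟩ := global_bound φ hφ hsupp (show n ≤ k by omega)
    set Cmid : ℝ := Mn / μ ^ e with hCmid
    have hCmid0 : 0 < Cmid := by positivity
    have hφnn := phi_nonneg φ hφ hsupp hpos
    set C : ℝ := max (max C₁ C₂) Cmid with hC
    have hC0 : 0 < C := lt_of_lt_of_le hCmid0 (le_max_right _ _)
    refine ⟨C, hC0, fun t ht => ?_⟩
    rw [abs_of_nonneg (hφnn t ht)]
    have hC₁' : C₁ ≤ C := le_trans (le_max_left _ _) (le_max_left _ _)
    have hC₂' : C₂ ≤ C := le_trans (le_max_right _ _) (le_max_left _ _)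
    have hCm' : Cmid ≤ C := le_max_right _ _
    have hrpow_nn : 0 ≤ (φ t) ^ e := Real.rpow_nonneg (hφnn t ht) e
    rcases eq_or_lt_of_le ht.1 with h0 | h0
    · -- t = 0
      have hz : iteratedDeriv n φ 0 = 0 := iter_zero_at_zero φ hφ hsupp (by omega)
      rw [← h0, hz, abs_zero]
      exact mul_nonneg hC0.le (Real.rpow_nonneg (hφnn 0 ⟨le_refl _, by norm_num⟩) e)
    rcases eq_or_lt_of_le ht.2 with h1 | h1
    · -- t = 1
      have hz : iteratedDeriv n φ 1 = 0 := iter_zero_at_one φ hφ hsupp (by omega)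
      rw [h1, hz, abs_zero]
      exact mul_nonneg hC0.le (Real.rpow_nonneg (hφnn 1 ⟨by norm_num, le_refl _⟩) e)
    by_cases hleft : t < δ₁
    · exact le_trans (hC₁ t ⟨h0, hleft⟩)
        (mul_le_mul_of_nonneg_right hC₁' hrpow_nn)
    by_cases hright : 1 - δ₂ < t
    · have hu : (1:ℝ) - t ∈ Set.Ioo (0:ℝ) δ₂ := ⟨by linarith, by linarith⟩
      have := hC₂ (1 - t) hu
      have habs : |iteratedDeriv n ψ (1 - t)| = |iteratedDeriv n φ t| := by
        rw [refl_deriv φ n (1 - t), abs_mul, abs_pow, abs_neg, abs_one, one_pow, one_mul,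
          show (1:ℝ) - (1 - t) = t by ring]
      have hψeq : ψ (1 - t) = φ t := by
        simp only [hψdef]
        rw [show (1:ℝ) - (1 - t) = t by ring]
      rw [habs, hψeq] at this
      exact le_trans this (mul_le_mul_of_nonneg_right hC₂' hrpow_nn)
    · -- middle
      have htmid : t ∈ Set.Icc (δ₁/2) (1 - δ₂/2) := by
        constructor
        · linarith [not_lt.mp hleft, half_pos hδ₁0, hδ₁0]
        · have := not_lt.mp hright
          linarith [half_pos hδ₂0, hδ₂0]
      have hμt : μ ≤ φ t := hx₀ t htmid
      have hμe : μ ^ e ≤ (φ t) ^ e := Real.rpow_le_rpow hμ0.le hμt he.le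
      have h2 : |iteratedDeriv n φ t| ≤ Mn := hMn t
      have h3 : Mn = Cmid * μ ^ e := by
        rw [hCmid]
        field_simp
      calc |iteratedDeriv n φ t| ≤ Mn := h2
        _ = Cmid * μ ^ e := h3
        _ ≤ Cmid * (φ t) ^ e := mul_le_mul_of_nonneg_left hμe hCmid0.le
        _ ≤ C * (φ t) ^ e := mul_le_mul_of_nonneg_right hCm' hrpow_nn

end
end

section
/- Let 1 ≤ p ≤ ∞, m ∈ ℕ_0 and k ∈ ℕ with k > m + 1. Let φ ∈ C_0^k(ℝ) satisfy supp(φ) ⊆ [0,1], φ(t) > 0 on (0,1), and suppose φ^{(k)} has only finitely many zeros in [0,1]. Then for all r, α ∈ ℕ_0 with r ≤ m, α ≤ m and r + α ≤ m there exists a constant C > 0 such that |φ^{(r)}(t) φ^{(α)}(t)| ≤ C |φ(t)|^{1/p} for all t ∈ [0,1] (with |φ(t)|^{1/p} interpreted as 1 when p = ∞). -/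
open MeasureTheory Real Function
open scoped ENNReal NNReal BigOperators
open Set Filter Topology

noncomputable section


lemma iteratedDeriv_zero_fun' (n : ℕ) : iteratedDeriv n (fun _ : ℝ => (0:ℝ)) = fun _ => 0 := by
  induction n with
  | zero => simp [iteratedDeriv_zero]
  | succ n ih => rw [iteratedDeriv_succ, ih]; simp

/-- if g is continuous, zero on the left of x, then g x = 0 -/
lemma left_limit_zero {g : ℝ → ℝ} (hg : Continuous g) {x : ℝ} (h : ∀ y < x, g y = 0) :
    g x = 0 := by
  have h1 : Tendsto g (𝓝[<] x) (𝓝 (g x)) :=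
    (hg.continuousAt).continuousWithinAt.tendsto
  have h2 : Tendsto g (𝓝[<] x) (𝓝 0) := by
    apply Tendsto.congr' _ tendsto_const_nhds
    filter_upwards [self_mem_nhdsWithin] with y hy
    exact (h y hy).symm
  exact tendsto_nhds_unique h1 h2

lemma right_limit_zero {g : ℝ → ℝ} (hg : Continuous g) {x : ℝ} (h : ∀ y, x < y → g y = 0) :
    g x = 0 := by
  have h1 : Tendsto g (𝓝[>] x) (𝓝 (g x)) :=
    (hg.continuousAt).continuousWithinAt.tendsto
  have h2 : Tendsto g (𝓝[>] x) (𝓝 0) := by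
    apply Tendsto.congr' _ tendsto_const_nhds
    filter_upwards [self_mem_nhdsWithin] with y hy
    exact (h y hy).symm
  exact tendsto_nhds_unique h1 h2

/-- positivity propagates downward -/
lemma pos_of_deriv_pos {g : ℝ → ℝ} (hg : Differentiable ℝ g) (hc : Continuous g)
    (g0 : g 0 = 0) {δ : ℝ} (hd : ∀ t ∈ Ioo (0:ℝ) δ, 0 < deriv g t) :
    ∀ t ∈ Ioo (0:ℝ) δ, 0 < g t := by
  intro t ht
  have hmono : StrictMonoOn g (Ico (0:ℝ) δ) := by
    apply strictMonoOn_of_deriv_pos (convex_Ico 0 δ) hc.continuousOn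
    rwa [interior_Ico]
  have := hmono (left_mem_Ico.2 (ht.1.trans ht.2)) ⟨ht.1.le, ht.2⟩ ht.1
  rwa [g0] at this


section Key
variable {k : ℕ} {φ : ℝ → ℝ}

/-- all derivatives positive near 0, by downward induction -/
lemma down_all (hφ : ContDiff ℝ k φ) (h0 : ∀ j ≤ k, iteratedDeriv j φ 0 = 0)
    {δ : ℝ} (htop : ∀ t ∈ Ioo (0:ℝ) δ, 0 < iteratedDeriv k φ t) :
    ∀ j ≤ k, ∀ t ∈ Ioo (0:ℝ) δ, 0 < iteratedDeriv j φ t := by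
  suffices H : ∀ d : ℕ, ∀ j : ℕ, j + d = k → ∀ t ∈ Ioo (0:ℝ) δ, 0 < iteratedDeriv j φ t by
    intro j hj
    exact H (k - j) j (by omega)
  intro d
  induction d with
  | zero => intro j hj; subst hj; simpa using htop
  | succ d ih =>
    intro j hj t ht
    have hjk : j < k := by omega
    have hdiff : Differentiable ℝ (iteratedDeriv j φ) :=
      hφ.differentiable_iteratedDeriv j (by exact_mod_cast hjk)
    have hcont : Continuous (iteratedDeriv j φ) :=
      hφ.continuous_iteratedDeriv j (by exact_mod_cast hjk.le)
    have hd : ∀ s ∈ Ioo (0:ℝ) δ, 0 < deriv (iteratedDeriv j φ) s := by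
      intro s hs
      rw [← iteratedDeriv_succ]
      exact ih (j + 1) (by omega) s hs
    exact pos_of_deriv_pos hdiff hcont (h0 j hjk.le) hd t ht


lemma all_pos (hφ : ContDiff ℝ k φ) (h0 : ∀ j ≤ k, iteratedDeriv j φ 0 = 0)
    {δ : ℝ} (hδ : 0 < δ) (hpos : ∀ t ∈ Ioo (0:ℝ) δ, 0 < φ t)
    (hne : ∀ t ∈ Ioo (0:ℝ) δ, iteratedDeriv k φ t ≠ 0) :
    ∀ j ≤ k, ∀ t ∈ Ioo (0:ℝ) δ, 0 < iteratedDeriv j φ t := by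
  have hmem : (δ/2) ∈ Ioo (0:ℝ) δ := ⟨half_pos hδ, half_lt_self hδ⟩
  have hcontk : Continuous (iteratedDeriv k φ) := hφ.continuous_iteratedDeriv k le_rfl
  -- constant sign of k-th derivative
  have hsign : (∀ t ∈ Ioo (0:ℝ) δ, 0 < iteratedDeriv k φ t) ∨
      (∀ t ∈ Ioo (0:ℝ) δ, iteratedDeriv k φ t < 0) := by
    have key : ∀ t ∈ Ioo (0:ℝ) δ, ∀ t' ∈ Ioo (0:ℝ) δ,
        0 < iteratedDeriv k φ t → 0 < iteratedDeriv k φ t' := by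
      intro t ht t' ht' hlt
      rcases lt_trichotomy (iteratedDeriv k φ t') 0 with h | h | h
      · exfalso
        have hsub : uIcc t' t ⊆ Ioo (0:ℝ) δ :=
          (Set.ordConnected_Ioo).uIcc_subset ht' ht
        have : (0:ℝ) ∈ uIcc (iteratedDeriv k φ t') (iteratedDeriv k φ t) :=
          mem_uIcc.2 (Or.inl ⟨h.le, hlt.le⟩)
        obtain ⟨c, hc, hc0⟩ := intermediate_value_uIcc (hcontk.continuousOn) this
        exact hne c (hsub hc) hc0
      · exact absurd h (hne t' ht')
      · exact h
    rcases lt_trichotomy (iteratedDeriv k φ (δ/2)) 0 with h | h | h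
    · right; intro t ht
      by_contra hc
      push_neg at hc
      have : 0 < iteratedDeriv k φ t := lt_of_le_of_ne hc (Ne.symm (hne t ht))
      exact absurd (key t ht (δ/2) hmem this) (not_lt.2 h.le)
    · exact absurd h (hne (δ/2) hmem)
    · left; exact fun t ht => key (δ/2) hmem t ht h
  rcases hsign with hsign | hsign
  · exact down_all hφ h0 hsign
  · exfalso
    -- apply down_all to -φ to get φ < 0 near 0, contradiction
    have hφ' : ContDiff ℝ k (fun t => -φ t) := hφ.neg
    have h0' : ∀ j ≤ k, iteratedDeriv j (fun t => -φ t) 0 = 0 := by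
      intro j hj; rw [iteratedDeriv_fun_neg]; rw [h0 j hj]; simp
    have htop' : ∀ t ∈ Ioo (0:ℝ) δ, 0 < iteratedDeriv k (fun t => -φ t) t := by
      intro t ht; rw [iteratedDeriv_fun_neg]; linarith [hsign t ht]
    have := down_all hφ' h0' htop' 0 (Nat.zero_le _) (δ/2) hmem
    simp only [iteratedDeriv_zero] at this
    linarith [hpos (δ/2) hmem]

variable {δ : ℝ}

lemma smono_aux (hφ : ContDiff ℝ k φ)
    (hall : ∀ j ≤ k, ∀ t ∈ Ioo (0:ℝ) δ, 0 < iteratedDeriv j φ t)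
    {j : ℕ} (hj : j + 1 ≤ k) : StrictMonoOn (iteratedDeriv j φ) (Ico (0:ℝ) δ) := by
  apply strictMonoOn_of_deriv_pos (convex_Ico 0 δ)
    ((hφ.continuous_iteratedDeriv j (by exact_mod_cast (by omega : j ≤ k))).continuousOn)
  intro x hx
  rw [interior_Ico] at hx
  rw [← iteratedDeriv_succ]
  exact hall (j+1) hj x hx

lemma mvt_aux (hφ : ContDiff ℝ k φ) {j : ℕ} (hj : j + 1 ≤ k) {a b : ℝ} (hab : a < b) :
    ∃ c ∈ Ioo a b, iteratedDeriv j φ b - iteratedDeriv j φ a = (b - a) * iteratedDeriv (j+1) φ c := by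
  have hd : ∀ x ∈ Ioo a b, HasDerivAt (iteratedDeriv j φ) (iteratedDeriv (j+1) φ x) x := by
    intro x _
    have := (hφ.differentiable_iteratedDeriv j
      (by exact_mod_cast (by omega : j < k))).differentiableAt (x := x)
    rw [iteratedDeriv_succ]
    exact this.hasDerivAt
  obtain ⟨c, hc, hc'⟩ := exists_hasDerivAt_eq_slope (iteratedDeriv j φ) _ hab
    ((hφ.continuous_iteratedDeriv j (by exact_mod_cast (by omega : j ≤ k))).continuousOn) hd
  refine ⟨c, hc, ?_⟩
  rw [hc', mul_comm, div_mul_cancel₀ _ (sub_ne_zero.2 hab.ne')]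

lemma hnn_aux (h0 : ∀ j ≤ k, iteratedDeriv j φ 0 = 0)
    (hall : ∀ j ≤ k, ∀ t ∈ Ioo (0:ℝ) δ, 0 < iteratedDeriv j φ t)
    {j : ℕ} (hj : j ≤ k) {a : ℝ} (ha : 0 ≤ a) (ha' : a < δ) : 0 ≤ iteratedDeriv j φ a := by
  rcases eq_or_lt_of_le ha with h | h
  · rw [← h, h0 j hj]
  · exact (hall j hj a ⟨h, ha'⟩).le

lemma chainP (hφ : ContDiff ℝ k φ) (h0 : ∀ j ≤ k, iteratedDeriv j φ 0 = 0)
    (hall : ∀ j ≤ k, ∀ t ∈ Ioo (0:ℝ) δ, 0 < iteratedDeriv j φ t) :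
    ∀ j : ℕ, j + 1 ≤ k → ∀ a b : ℝ, 0 ≤ a → a ≤ b → b < δ →
      iteratedDeriv j φ a * ((b - a) / j) ^ j ≤ φ b := by
  intro j
  induction j with
  | zero =>
    intro h1k a b ha hab hb
    have hm : MonotoneOn (iteratedDeriv 0 φ) (Ico (0:ℝ) δ) :=
      (smono_aux hφ hall (j := 0) h1k).monotoneOn
    simpa using hm ⟨ha, lt_of_le_of_lt hab hb⟩ ⟨ha.trans hab, hb⟩ hab
  | succ j ih =>
    intro hjk a b ha hab hb
    rcases eq_or_lt_of_le hab with rfl | hlt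
    · simp only [sub_self, zero_div, zero_pow (Nat.succ_ne_zero j), mul_zero]
      have := hnn_aux h0 hall (j := 0) (by omega) ha hb
      simpa using this
    · set a' := a + (b - a) / (j + 1) with ha'def
      have hj1 : (0:ℝ) < (j:ℝ) + 1 := by positivity
      have hfrac : 0 < (b - a) / ((j:ℝ) + 1) := by
        apply div_pos (by linarith) hj1
      have haa' : a < a' := by rw [ha'def]; linarith
      have ha'b : a' ≤ b := by
        rw [ha'def]
        have : (b - a) / ((j:ℝ) + 1) ≤ b - a := by
          apply div_le_self (by linarith) (by linarith)
        linarith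
      -- lower MVT on [a, a']
      obtain ⟨c, hc, hceq⟩ := mvt_aux hφ (j := j) (by omega) haa'
      have hmono : MonotoneOn (iteratedDeriv (j+1) φ) (Ico (0:ℝ) δ) :=
        (smono_aux hφ hall (by omega : j + 1 + 1 ≤ k)).monotoneOn
      have hcmem : c ∈ Ico (0:ℝ) δ := ⟨le_of_lt (lt_of_le_of_lt ha hc.1),
        lt_of_lt_of_le hc.2 (ha'b.trans hb.le)⟩
      have hamem : a ∈ Ico (0:ℝ) δ := ⟨ha, lt_of_le_of_lt hab hb⟩
      have hlow : (a' - a) * iteratedDeriv (j+1) φ a ≤ iteratedDeriv j φ a' := by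
        have h1 : iteratedDeriv (j+1) φ a ≤ iteratedDeriv (j+1) φ c :=
          hmono hamem hcmem hc.1.le
        have h2 : 0 ≤ iteratedDeriv j φ a := hnn_aux h0 hall (j := j) (by omega) ha (lt_of_le_of_lt hab hb)
        nlinarith [hceq, sub_pos.2 haa']
      have ha'a : a' - a = (b - a) / ((j:ℝ) + 1) := by rw [ha'def]; ring
      -- IH at (a', b)
      have hIH := ih (by omega) a' b (le_of_lt (lt_of_le_of_lt ha haa')) ha'b hb
      have hexp : ((b - a') / (j:ℝ)) ^ j = ((b - a) / ((j:ℝ) + 1)) ^ j := by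
        rcases Nat.eq_zero_or_pos j with rfl | hj0
        · simp
        · congr 1
          have hjne : (j:ℝ) ≠ 0 := by positivity
          rw [ha'def]
          field_simp
          ring
      rw [hexp] at hIH
      have hnna' : 0 ≤ iteratedDeriv j φ a' :=
        hnn_aux h0 hall (j := j) (by omega) (le_of_lt (lt_of_le_of_lt ha haa')) (lt_of_le_of_lt ha'b hb)
      calc iteratedDeriv (j+1) φ a * ((b - a) / (↑(j+1))) ^ (j+1)
          = ((a' - a) * iteratedDeriv (j+1) φ a) * ((b - a) / ((j:ℝ) + 1)) ^ j := by
            rw [ha'a]; push_cast; ring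
        _ ≤ iteratedDeriv j φ a' * ((b - a) / ((j:ℝ) + 1)) ^ j := by
            apply mul_le_mul_of_nonneg_right hlow (by positivity)
        _ ≤ φ b := hIH

lemma chainQ (hφ : ContDiff ℝ k φ) (h0 : ∀ j ≤ k, iteratedDeriv j φ 0 = 0)
    (hall : ∀ j ≤ k, ∀ t ∈ Ioo (0:ℝ) δ, 0 < iteratedDeriv j φ t) :
    ∀ i : ℕ, i + 1 ≤ k → ∀ t : ℝ, 0 < t → t < δ → φ t ≤ t ^ i * iteratedDeriv i φ t := by
  intro i
  induction i with
  | zero => intro _ t _ _; simp [iteratedDeriv_zero]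
  | succ i ih =>
    intro hik t ht htδ
    have h1 : φ t ≤ t ^ i * iteratedDeriv i φ t := ih (by omega) t ht htδ
    obtain ⟨c, hc, hceq⟩ := mvt_aux hφ (j := i) (by omega) ht
    have hmono : MonotoneOn (iteratedDeriv (i+1) φ) (Ico (0:ℝ) δ) :=
      (smono_aux hφ hall (by omega : i + 1 + 1 ≤ k)).monotoneOn
    have h2 : iteratedDeriv i φ t ≤ t * iteratedDeriv (i+1) φ t := by
      have hcd : iteratedDeriv (i+1) φ c ≤ iteratedDeriv (i+1) φ t :=
        hmono ⟨hc.1.le, hc.2.trans htδ⟩ ⟨ht.le, htδ⟩ hc.2.le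
      have := h0 i (by omega)
      nlinarith
    calc φ t ≤ t ^ i * iteratedDeriv i φ t := h1
      _ ≤ t ^ i * (t * iteratedDeriv (i+1) φ t) := by
          apply mul_le_mul_of_nonneg_left h2 (by positivity)
      _ = t ^ (i+1) * iteratedDeriv (i+1) φ t := by ring

lemma Bd (hφ : ContDiff ℝ k φ) (h0 : ∀ j ≤ k, iteratedDeriv j φ 0 = 0)
    (hall : ∀ j ≤ k, ∀ t ∈ Ioo (0:ℝ) δ, 0 < iteratedDeriv j φ t)
    (hk2 : 2 ≤ k) {δ₂ : ℝ} (hδ₂ : 0 < δ₂) (hδ₂δ : δ₂ < δ)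
    (hQ : ∀ t ∈ Ioc (0:ℝ) δ₂, φ t ≤ t ^ (k-1)) :
    ∀ d : ℕ, d ≤ k - 1 → ∃ C : ℝ, 0 < C ∧ ∀ t ∈ Ioc (0:ℝ) δ₂,
      iteratedDeriv (k-1-d) φ t ≤ C * φ t ^ ((d:ℝ)/((k:ℝ)-1)) := by
  have hK : (0:ℝ) < (k:ℝ) - 1 := by
    have : (2:ℝ) ≤ (k:ℝ) := by exact_mod_cast hk2
    linarith
  have hKne : ((k:ℝ) - 1) ≠ 0 := ne_of_gt hK
  intro d
  induction d with
  | zero =>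
    refine fun _ => ⟨iteratedDeriv (k-1) φ δ₂, hall (k-1) (by omega) δ₂ ⟨hδ₂, hδ₂δ⟩, ?_⟩
    intro t ht
    rw [Nat.sub_zero, Nat.cast_zero, zero_div, Real.rpow_zero, mul_one]
    exact (smono_aux hφ hall (by omega : (k-1) + 1 ≤ k)).monotoneOn
      ⟨ht.1.le, lt_of_le_of_lt ht.2 hδ₂δ⟩ ⟨hδ₂.le, hδ₂δ⟩ ht.2
  | succ d ih =>
    intro hd1
    obtain ⟨C, hC, hCb⟩ := ih (by omega)
    set j := k - 2 - d with hjdef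
    have hj1 : j + 1 = k - 1 - d := by omega
    have hjk1 : k - 1 - (d+1) = j := by omega
    rcases Nat.eq_zero_or_pos j with hj0 | hjpos
    · -- j = 0 : trivial, exponent is 1
      refine ⟨1, one_pos, ?_⟩
      intro t ht
      have hφt : 0 < φ t := by
        have := hall 0 (by omega) t ⟨ht.1, lt_of_le_of_lt ht.2 hδ₂δ⟩
        simpa using this
      have hde : ((d:ℝ) + 1) = (k:ℝ) - 1 := by
        have : d + 1 = k - 1 := by omega
        have := congrArg (fun n : ℕ => (n:ℝ)) this
        push_cast [Nat.cast_sub (by omega : 1 ≤ k)] at this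
        linarith
      have hexp : ((d+1:ℕ):ℝ)/((k:ℝ)-1) = 1 := by
        push_cast
        rw [hde, div_self hKne]
      rw [hjk1, hj0, hexp, Real.rpow_one, one_mul]
      simp only [iteratedDeriv_zero]
      exact le_rfl
    · refine ⟨(j:ℝ)^j + C, by positivity, ?_⟩
      intro t ht
      have htδ : t ∈ Ioo (0:ℝ) δ := ⟨ht.1, lt_of_le_of_lt ht.2 hδ₂δ⟩
      have hφt : 0 < φ t := by simpa using hall 0 (by omega) t htδ
      set K := (k:ℝ) - 1 with hKdef
      set lam := φ t ^ ((1:ℝ)/K) with hlam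
      have hlampos : 0 < lam := Real.rpow_pos_of_pos hφt _
      have hlamt : lam ≤ t := by
        have h1 : φ t ^ ((1:ℝ)/K) ≤ (t ^ (k-1) : ℝ) ^ ((1:ℝ)/K) :=
          Real.rpow_le_rpow hφt.le (hQ t ht) (by positivity)
        have h2 : ((t:ℝ) ^ (k-1)) ^ ((1:ℝ)/K) = t := by
          rw [← Real.rpow_natCast t (k-1), ← Real.rpow_mul ht.1.le]
          have : ((k-1:ℕ):ℝ) = K := by
            push_cast [Nat.cast_sub (by omega : 1 ≤ k)]; rfl
          rw [this, mul_one_div, div_self hKne, Real.rpow_one]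
        rw [h2] at h1
        rw [hlam]
        exact h1
      -- MVT upper bound on [t - lam, t]
      obtain ⟨c, hc, hceq⟩ := mvt_aux hφ (j := j) (by omega) (by linarith : t - lam < t)
      have hmono : MonotoneOn (iteratedDeriv (j+1) φ) (Ico (0:ℝ) δ) :=
        (smono_aux hφ hall (by omega : j + 1 + 1 ≤ k)).monotoneOn
      have hcmem : c ∈ Ico (0:ℝ) δ := ⟨by linarith [hc.1, hlamt], hc.2.trans htδ.2⟩
      have htmem : t ∈ Ico (0:ℝ) δ := ⟨ht.1.le, htδ.2⟩
      have hup : iteratedDeriv j φ t ≤ iteratedDeriv j φ (t - lam) + lam * iteratedDeriv (j+1) φ t := by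
        have h1 : iteratedDeriv (j+1) φ c ≤ iteratedDeriv (j+1) φ t := hmono hcmem htmem hc.2.le
        have h2 : t - (t - lam) = lam := by ring
        rw [h2] at hceq
        nlinarith [hlampos]
      -- chainP bound
      have hchain := chainP hφ h0 hall j (by omega) (t - lam) t (by linarith [hlamt])
        (by linarith) htδ.2
      have hpowpos : (0:ℝ) < (lam / (j:ℝ)) ^ j := by
        have : (0:ℝ) < (j:ℝ) := by exact_mod_cast hjpos
        positivity
      have hlow : iteratedDeriv j φ (t - lam) ≤ φ t * (j:ℝ)^j / lam^j := by
        have h2 : t - (t - lam) = lam := by ring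
        rw [h2] at hchain
        have := (le_div_iff₀ hpowpos).2 hchain
        rwa [div_pow, div_div_eq_mul_div] at this
      have hIH := hCb t ht
      rw [← hj1] at hIH
      set X := φ t with hX
      have hjr : (j:ℝ) = ((k:ℝ) - 2) - (d:ℝ) := by
        rw [hjdef]
        push_cast [Nat.cast_sub (by omega : d ≤ k - 2), Nat.cast_sub (by omega : 2 ≤ k)]
        ring
      have A1 : lam ^ j = X ^ ((j:ℝ)/K) := by
        rw [hlam, ← Real.rpow_natCast (X ^ ((1:ℝ)/K)) j, ← Real.rpow_mul hφt.le,
          show (1:ℝ)/K * (j:ℝ) = (j:ℝ)/K from by ring]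
      have A2 : X * (j:ℝ)^j / lam^j = (j:ℝ)^j * X ^ (((d:ℝ)+1)/K) := by
        rw [show ((d:ℝ)+1)/K = 1 - (j:ℝ)/K from by
          have hKne' : (k:ℝ) - 1 ≠ 0 := hKne
          rw [hjr, hKdef]; field_simp; ring]
        rw [Real.rpow_sub hφt, Real.rpow_one, A1]
        ring
      have A3 : lam * (C * X ^ ((d:ℝ)/K)) = C * X ^ (((d:ℝ)+1)/K) := by
        rw [hlam, show ((d:ℝ)+1)/K = (1:ℝ)/K + (d:ℝ)/K from by ring,
          Real.rpow_add hφt]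
        ring
      rw [hjk1, show (((d+1:ℕ)):ℝ) = (d:ℝ)+1 from by push_cast; ring]
      calc iteratedDeriv j φ t ≤ iteratedDeriv j φ (t - lam) + lam * iteratedDeriv (j+1) φ t := hup
        _ ≤ (X * (j:ℝ)^j / lam^j) + lam * (C * X ^ ((d:ℝ)/K)) := by
            have := mul_le_mul_of_nonneg_left hIH hlampos.le
            exact add_le_add hlow this
        _ = ((j:ℝ)^j + C) * X ^ (((d:ℝ)+1)/K) := by rw [A2, A3]; ring

lemma key (hk2 : 2 ≤ k) (hφ : ContDiff ℝ k φ) (h0 : ∀ j ≤ k, iteratedDeriv j φ 0 = 0)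
    (hδ : 0 < δ) (hpos : ∀ t ∈ Ioo (0:ℝ) δ, 0 < φ t)
    (hne : ∀ t ∈ Ioo (0:ℝ) δ, iteratedDeriv k φ t ≠ 0)
    (θ : ℝ) (hθ0 : 0 ≤ θ) (hθ1 : θ ≤ 1)
    (r α : ℕ) (hrα : r + α + 2 ≤ k) :
    ∃ C : ℝ, 0 < C ∧ ∃ δ' : ℝ, 0 < δ' ∧ δ' < δ ∧ ∀ t ∈ Ioc (0:ℝ) δ',
      |iteratedDeriv r φ t * iteratedDeriv α φ t| ≤ C * |φ t| ^ θ := by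
  have hall := all_pos hφ h0 hδ hpos hne
  have hK : (0:ℝ) < (k:ℝ) - 1 := by
    have : (2:ℝ) ≤ (k:ℝ) := by exact_mod_cast hk2
    linarith
  -- find δ₂ where the (k-1)-st derivative is at most 1
  have hcontk1 : Continuous (iteratedDeriv (k-1) φ) :=
    hφ.continuous_iteratedDeriv (k-1) (by exact_mod_cast (by omega : k - 1 ≤ k))
  have htend : Tendsto (iteratedDeriv (k-1) φ) (𝓝 0) (𝓝 0) := by
    have := hcontk1.continuousAt (x := 0)
    rwa [ContinuousAt, h0 (k-1) (by omega)] at this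
  have hev : ∀ᶠ x in 𝓝 (0:ℝ), iteratedDeriv (k-1) φ x < 1 :=
    htend.eventually_lt_const one_pos
  obtain ⟨ε, hε, hball⟩ := Metric.eventually_nhds_iff.1 hev
  set δ₂ := min (min (ε/2) (δ/2)) 1 with hδ₂def
  have hδ₂pos : 0 < δ₂ := lt_min (lt_min (by linarith) (by linarith)) one_pos
  have hδ₂δ : δ₂ < δ := lt_of_le_of_lt ((min_le_left _ _).trans (min_le_right _ _)) (by linarith)
  have hδ₂ε : δ₂ < ε := lt_of_le_of_lt ((min_le_left _ _).trans (min_le_left _ _)) (by linarith)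
  have hδ₂1 : δ₂ ≤ 1 := min_le_right _ _
  have hQ : ∀ t ∈ Ioc (0:ℝ) δ₂, φ t ≤ t ^ (k-1) := by
    intro t ht
    have h1 := chainQ hφ h0 hall (k-1) (by omega) t ht.1 (lt_of_le_of_lt ht.2 hδ₂δ)
    have h2 : iteratedDeriv (k-1) φ t < 1 := by
      apply hball
      rw [Real.dist_eq, sub_zero, abs_of_pos ht.1]
      linarith [ht.2]
    nlinarith [pow_nonneg ht.1.le (k-1)]
  have hφ1 : ∀ t ∈ Ioc (0:ℝ) δ₂, φ t ≤ 1 := by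
    intro t ht
    refine (hQ t ht).trans (pow_le_one₀ ht.1.le ?_)
    linarith [ht.2]
  obtain ⟨Cr, hCr, hCrb⟩ := Bd hφ h0 hall hk2 hδ₂pos hδ₂δ hQ (k-1-r) (by omega)
  obtain ⟨Ca, hCa, hCab⟩ := Bd hφ h0 hall hk2 hδ₂pos hδ₂δ hQ (k-1-α) (by omega)
  have hrr : k - 1 - (k-1-r) = r := by omega
  have haa : k - 1 - (k-1-α) = α := by omega
  rw [hrr] at hCrb
  rw [haa] at hCab
  refine ⟨Cr * Ca, mul_pos hCr hCa, δ₂, hδ₂pos, hδ₂δ, ?_⟩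
  intro t ht
  have htδ : t ∈ Ioo (0:ℝ) δ := ⟨ht.1, lt_of_le_of_lt ht.2 hδ₂δ⟩
  have hφt : 0 < φ t := hpos t htδ
  have hr : 0 < iteratedDeriv r φ t := hall r (by omega) t htδ
  have ha : 0 < iteratedDeriv α φ t := hall α (by omega) t htδ
  set er := ((k-1-r:ℕ):ℝ)/((k:ℝ)-1) with herdef
  set ea := ((k-1-α:ℕ):ℝ)/((k:ℝ)-1) with headef
  have hE1 : (1:ℝ) ≤ er + ea := by
    rw [herdef, headef, ← add_div, le_div_iff₀ hK]
    have c1 : ((k-1-r:ℕ):ℝ) = (k:ℝ) - 1 - r := by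
      push_cast [Nat.cast_sub (by omega : r ≤ k - 1), Nat.cast_sub (by omega : 1 ≤ k)]; ring
    have c2 : ((k-1-α:ℕ):ℝ) = (k:ℝ) - 1 - α := by
      push_cast [Nat.cast_sub (by omega : α ≤ k - 1), Nat.cast_sub (by omega : 1 ≤ k)]; ring
    have c3 : (r:ℝ) + (α:ℝ) + 2 ≤ (k:ℝ) := by exact_mod_cast hrα
    rw [c1, c2]
    linarith
  have hprod : iteratedDeriv r φ t * iteratedDeriv α φ t ≤ (Cr * Ca) * φ t ^ (er + ea) := by
    have := mul_le_mul (hCrb t ht) (hCab t ht) ha.le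
      (by positivity)
    calc iteratedDeriv r φ t * iteratedDeriv α φ t
        ≤ (Cr * φ t ^ er) * (Ca * φ t ^ ea) := this
      _ = (Cr * Ca) * (φ t ^ er * φ t ^ ea) := by ring
      _ = (Cr * Ca) * φ t ^ (er + ea) := by rw [← Real.rpow_add hφt]
  have hexpθ : φ t ^ (er + ea) ≤ φ t ^ θ :=
    Real.rpow_le_rpow_of_exponent_ge hφt (hφ1 t ht) (hθ1.trans hE1)
  rw [abs_of_pos (mul_pos hr ha), abs_of_pos hφt]
  calc iteratedDeriv r φ t * iteratedDeriv α φ t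
      ≤ (Cr * Ca) * φ t ^ (er + ea) := hprod
    _ ≤ (Cr * Ca) * φ t ^ θ := by
        apply mul_le_mul_of_nonneg_left hexpθ (by positivity)

end Key

/-- Corollary (boundedness of products of derivatives of the kernel `φ`): for
`1 ≤ p ≤ ∞`, `m ∈ ℕ₀` and `k > m + 1`, a kernel `φ ∈ C_0^k(ℝ)` with
`supp φ ⊆ [0,1]`, `φ > 0` on `(0,1)` and `φ^{(k)}` having only finitely many
zeros in `[0,1]` satisfies `|φ^{(r)}(t) φ^{(α)}(t)| ≤ C |φ(t)|^{1/p}` on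
`[0,1]` for all `r, α ≤ m` with `r + α ≤ m`. -/
theorem derivative_product_quotient_bound
    (p : ℝ≥0∞) (hp : 1 ≤ p) (m k : ℕ) (hk : m + 1 < k)
    (φ : ℝ → ℝ) (hφ : ContDiff ℝ k φ) (hsupp : tsupport φ ⊆ Set.Icc 0 1)
    (hpos : ∀ t ∈ Set.Ioo (0:ℝ) 1, 0 < φ t)
    (hzeros : {t ∈ Set.Icc (0:ℝ) 1 | iteratedDeriv k φ t = 0}.Finite) :
    ∀ r α : ℕ, r ≤ m → α ≤ m → r + α ≤ m →
      ∃ C : ℝ, 0 < C ∧ ∀ t ∈ Set.Icc (0:ℝ) 1,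
        |iteratedDeriv r φ t * iteratedDeriv α φ t| ≤ C * |φ t| ^ (1 / p.toReal) := by
  intro r α hr hα hrα
  have hk2 : 2 ≤ k := by omega
  set θ := 1 / p.toReal with hθdef
  have hθ0 : 0 ≤ θ := by positivity
  have hθ1 : θ ≤ 1 := by
    by_cases hp' : p = ⊤
    · simp [hθdef, hp']
    · have h1 : (1:ℝ) ≤ p.toReal := by
        rw [← ENNReal.toReal_one]
        exact ENNReal.toReal_mono hp' hp
      rw [hθdef, div_le_one (by linarith)]
      linarith
  -- derivatives vanish outside [0,1]
  have hout : ∀ x ∉ Icc (0:ℝ) 1, ∀ j : ℕ, iteratedDeriv j φ x = 0 := by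
    intro x hx j
    have hU : IsOpen (Icc (0:ℝ) 1)ᶜ := isClosed_Icc.isOpen_compl
    have hEq : Set.EqOn φ (fun _ => (0:ℝ)) (Icc (0:ℝ) 1)ᶜ := by
      intro y hy
      exact image_eq_zero_of_notMem_tsupport (fun hmem => hy (hsupp hmem))
    have := hEq.iteratedDeriv_of_isOpen hU j hx
    rwa [iteratedDeriv_zero_fun'] at this
  have h0 : ∀ j ≤ k, iteratedDeriv j φ 0 = 0 := by
    intro j hj
    apply left_limit_zero (hφ.continuous_iteratedDeriv j (by exact_mod_cast hj))
    intro y hy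
    exact hout y (fun hyy => absurd hyy.1 (not_le.2 hy)) j
  have h1 : ∀ j ≤ k, iteratedDeriv j φ 1 = 0 := by
    intro j hj
    apply right_limit_zero (hφ.continuous_iteratedDeriv j (by exact_mod_cast hj))
    intro y hy
    exact hout y (fun hyy => absurd hyy.2 (not_le.2 hy)) j
  -- zero-free zone near 0
  have hδ0 : ∃ δ0 : ℝ, 0 < δ0 ∧ δ0 ≤ 1 ∧ ∀ t ∈ Ioo (0:ℝ) δ0, iteratedDeriv k φ t ≠ 0 := by
    set S := {t ∈ Set.Icc (0:ℝ) 1 | iteratedDeriv k φ t = 0} ∩ Ioi 0 with hSdef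
    have hSfin : S.Finite := hzeros.inter_of_left _
    rcases S.eq_empty_or_nonempty with hS | hS
    · refine ⟨1, one_pos, le_rfl, ?_⟩
      intro t ht hzero
      have : t ∈ S := ⟨⟨⟨ht.1.le, ht.2.le⟩, hzero⟩, ht.1⟩
      rw [hS] at this
      exact this
    · have hne : hSfin.toFinset.Nonempty := by
        rwa [Set.Finite.toFinset_nonempty]
      set δ0 := hSfin.toFinset.min' hne with hδ0def
      have hδ0S : δ0 ∈ S := by
        rw [← Set.Finite.mem_toFinset hSfin]
        exact hSfin.toFinset.min'_mem hne
      refine ⟨min δ0 1, lt_min hδ0S.2 one_pos, min_le_right _ _, ?_⟩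
      intro t ht hzero
      have htS : t ∈ S := ⟨⟨⟨ht.1.le, (ht.2.trans_le (min_le_right _ _)).le⟩, hzero⟩, ht.1⟩
      have hle : δ0 ≤ t := hSfin.toFinset.min'_le t (by rwa [Set.Finite.mem_toFinset])
      have hlt : t < δ0 := ht.2.trans_le (min_le_left _ _)
      linarith
  obtain ⟨δ0, hδ0pos, hδ0le, hδ0ne⟩ := hδ0
  -- zero-free zone near 1
  have hδ1 : ∃ δ1 : ℝ, 0 < δ1 ∧ δ1 ≤ 1 ∧ ∀ t ∈ Ioo (1 - δ1) 1, iteratedDeriv k φ t ≠ 0 := by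
    set S := {t ∈ Set.Icc (0:ℝ) 1 | iteratedDeriv k φ t = 0} ∩ Iio 1 with hSdef
    have hSfin : S.Finite := hzeros.inter_of_left _
    rcases S.eq_empty_or_nonempty with hS | hS
    · refine ⟨1, one_pos, le_rfl, ?_⟩
      intro t ht hzero
      have : t ∈ S := ⟨⟨⟨by linarith [ht.1], ht.2.le⟩, hzero⟩, ht.2⟩
      rw [hS] at this
      exact this
    · have hne : hSfin.toFinset.Nonempty := by
        rwa [Set.Finite.toFinset_nonempty]
      set b0 := hSfin.toFinset.max' hne with hb0def
      have hb0S : b0 ∈ S := by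
        rw [← Set.Finite.mem_toFinset hSfin]
        exact hSfin.toFinset.max'_mem hne
      have hb0lt : b0 < 1 := hb0S.2
      have hb0nn : 0 ≤ b0 := hb0S.1.1.1
      refine ⟨1 - b0, by linarith, by linarith, ?_⟩
      intro t ht hzero
      have h1b : (1:ℝ) - (1 - b0) = b0 := by ring
      rw [h1b] at ht
      have htS : t ∈ S := ⟨⟨⟨by linarith [ht.1], ht.2.le⟩, hzero⟩, ht.2⟩
      have hle : t ≤ b0 := hSfin.toFinset.le_max' t (by rwa [Set.Finite.mem_toFinset])
      linarith [ht.1]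
  obtain ⟨δ1, hδ1pos, hδ1le, hδ1ne⟩ := hδ1
  -- the reflected function
  set ψ : ℝ → ℝ := fun t => φ (1 - t) with hψdef
  have hψc : ContDiff ℝ k ψ := hφ.comp (contDiff_const.sub contDiff_id)
  have hψd : ∀ (n : ℕ) (t : ℝ), iteratedDeriv n ψ t = (-1:ℝ)^n • iteratedDeriv n φ (1 - t) := by
    intro n t
    have e1 : ψ = fun x => (fun y => φ (-y)) (x + (-1)) := by
      funext x
      simp only [hψdef]
      congr 1
      ring
    rw [e1, iteratedDeriv_comp_add_const n (fun y => φ (-y)) (-1)]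
    show iteratedDeriv n (fun y => φ (-y)) (t + (-1)) = _
    rw [iteratedDeriv_comp_neg n φ (t + (-1))]
    congr 1
    ring
  have hψ0 : ∀ j ≤ k, iteratedDeriv j ψ 0 = 0 := by
    intro j hj
    rw [hψd j 0, show (1:ℝ) - 0 = 1 from by ring, h1 j hj, smul_zero]
  have hψpos : ∀ t ∈ Ioo (0:ℝ) δ1, 0 < ψ t := by
    intro t ht
    exact hpos (1 - t) ⟨by linarith [ht.2, hδ1le], by linarith [ht.1]⟩
  have hψne : ∀ t ∈ Ioo (0:ℝ) δ1, iteratedDeriv k ψ t ≠ 0 := by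
    intro t ht
    rw [hψd k t]
    apply smul_ne_zero (pow_ne_zero _ (by norm_num : (-1:ℝ) ≠ 0))
    exact hδ1ne (1 - t) ⟨by linarith [ht.2], by linarith [ht.1]⟩
  -- apply the key lemma near 0 and near 1
  obtain ⟨C1, hC1, δ1', hδ1'pos, hδ1'lt, hbound1⟩ :=
    key hk2 hφ h0 hδ0pos (fun t ht => hpos t ⟨ht.1, lt_of_lt_of_le ht.2 hδ0le⟩) hδ0ne
      θ hθ0 hθ1 r α (by omega)
  obtain ⟨C2, hC2, δ2', hδ2'pos, hδ2'lt, hbound2⟩ :=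
    key hk2 hψc hψ0 hδ1pos hψpos hψne θ hθ0 hθ1 r α (by omega)
  -- middle region
  have hmid : ∃ C3 : ℝ, 0 < C3 ∧ ∀ t ∈ Icc δ1' (1 - δ2'),
      |iteratedDeriv r φ t * iteratedDeriv α φ t| ≤ C3 * |φ t| ^ θ := by
    set Kc := Icc δ1' (1 - δ2') with hKcdef
    have hKsub : Kc ⊆ Ioo (0:ℝ) 1 := by
      intro x hx
      exact ⟨lt_of_lt_of_le hδ1'pos hx.1, lt_of_le_of_lt hx.2 (by linarith [hδ2'pos])⟩
    rcases Kc.eq_empty_or_nonempty with hK | hK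
    · exact ⟨1, one_pos, by rw [hK]; intro t ht; exact absurd ht (notMem_empty t)⟩
    · obtain ⟨t₀, ht₀, hmin⟩ := isCompact_Icc.exists_isMinOn hK hφ.continuous.continuousOn
      have hε : 0 < φ t₀ := hpos t₀ (hKsub ht₀)
      set G : ℝ → ℝ := fun t => |iteratedDeriv r φ t * iteratedDeriv α φ t| with hGdef
      have hGc : Continuous G := by
        apply Continuous.abs
        exact (hφ.continuous_iteratedDeriv r (by exact_mod_cast (by omega : r ≤ k))).mul
          (hφ.continuous_iteratedDeriv α (by exact_mod_cast (by omega : α ≤ k)))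
      obtain ⟨t₁, ht₁, hmax⟩ := isCompact_Icc.exists_isMaxOn hK hGc.continuousOn
      set M := G t₁ with hMdef
      have hM0 : 0 ≤ M := abs_nonneg _
      set e := min (φ t₀) 1 with hedef
      have hepos : 0 < e := lt_min hε one_pos
      refine ⟨(M + 1) / e, by positivity, ?_⟩
      intro t ht
      have hφt : 0 < φ t := hpos t (hKsub ht)
      have h1' : G t ≤ M := hmax ht
      have h2' : e ≤ |φ t| ^ θ := by
        rw [abs_of_pos hφt]
        have s1 : e ≤ e ^ θ := by
          nth_rewrite 1 [← Real.rpow_one e]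
          exact Real.rpow_le_rpow_of_exponent_ge hepos (min_le_right _ _) hθ1
        have s2 : e ^ θ ≤ φ t ^ θ :=
          Real.rpow_le_rpow hepos.le ((min_le_left _ _).trans (hmin ht)) hθ0
        linarith
      calc G t ≤ M := h1'
        _ ≤ (M + 1) / e * e - e := by
            rw [div_mul_cancel₀ _ (ne_of_gt hepos)]
            have : e ≤ 1 := min_le_right _ _
            linarith
        _ ≤ (M + 1) / e * |φ t| ^ θ - e := by
            have := mul_le_mul_of_nonneg_left h2' (by positivity : (0:ℝ) ≤ (M+1)/e)
            linarith
        _ ≤ (M + 1) / e * |φ t| ^ θ := by linarith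
  obtain ⟨C3, hC3, hbound3⟩ := hmid
  -- assemble
  set C := max (max C1 C2) C3 with hCdef
  have hCpos : 0 < C := lt_of_lt_of_le hC3 (le_max_right _ _)
  refine ⟨C, hCpos, ?_⟩
  intro t ht
  have hrpow0 : (0:ℝ) ≤ |φ t| ^ θ := Real.rpow_nonneg (abs_nonneg _) _
  rcases eq_or_lt_of_le ht.1 with h0t | h0t
  · rw [← h0t, h0 r (by omega), zero_mul, abs_zero]
    positivity
  rcases eq_or_lt_of_le ht.2 with ht1 | ht1
  · rw [ht1, h1 r (by omega), zero_mul, abs_zero]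
    positivity
  by_cases hcase1 : t ≤ δ1'
  · have := hbound1 t ⟨h0t, hcase1⟩
    calc |iteratedDeriv r φ t * iteratedDeriv α φ t| ≤ C1 * |φ t| ^ θ := this
      _ ≤ C * |φ t| ^ θ := by
          apply mul_le_mul_of_nonneg_right ((le_max_left C1 C2).trans (le_max_left _ _)) hrpow0
  by_cases hcase2 : 1 - δ2' ≤ t
  · have hs : 1 - t ∈ Ioc (0:ℝ) δ2' := ⟨by linarith, by linarith⟩
    have := hbound2 (1 - t) hs
    have heq1 : ψ (1 - t) = φ t := by
      simp only [hψdef]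
      congr 1
      ring
    have heq2 : |iteratedDeriv r ψ (1-t) * iteratedDeriv α ψ (1-t)|
        = |iteratedDeriv r φ t * iteratedDeriv α φ t| := by
      rw [hψd r (1-t), hψd α (1-t)]
      have h11 : (1:ℝ) - (1 - t) = t := by ring
      rw [h11]
      simp only [smul_eq_mul]
      rw [show ((-1:ℝ)^r * iteratedDeriv r φ t) * ((-1:ℝ)^α * iteratedDeriv α φ t)
          = (-1:ℝ)^(r+α) * (iteratedDeriv r φ t * iteratedDeriv α φ t) from by rw [pow_add]; ring]
      rw [abs_mul, abs_pow, abs_neg, abs_one, one_pow, one_mul]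
    rw [heq1, heq2] at this
    calc |iteratedDeriv r φ t * iteratedDeriv α φ t| ≤ C2 * |φ t| ^ θ := this
      _ ≤ C * |φ t| ^ θ := by
          apply mul_le_mul_of_nonneg_right ((le_max_right C1 C2).trans (le_max_left _ _)) hrpow0
  · have := hbound3 t ⟨le_of_not_ge hcase1, le_of_not_ge hcase2⟩
    calc |iteratedDeriv r φ t * iteratedDeriv α φ t| ≤ C3 * |φ t| ^ θ := this
      _ ≤ C * |φ t| ^ θ := by
          apply mul_le_mul_of_nonneg_right (le_max_right _ _) hrpow0

end
end

section
/- Let m ∈ ℕ and let η:ℝ→ℂ be a continuous function with supp(η) ⊆ (−1,1). Define Ψ_0(t) = ∑_{u=1}^{m} (−1)^{m−u} binom(m,u) u^{−1} η(t/u), Ψ(t) = Ψ_0(t) − (1/2)Ψ_0(t/2) and, for k ∈ ℕ, Ψ_k(t) = 2^k Ψ(2^k t). Then for every bounded measurable function g:ℝ→ℂ, every k ∈ ℕ and every t ∈ ℝ one has (Ψ_k ∗ g)(t) = ∫_{−1}^{1} η(−h)[Δ_{2^{−k}h}^m(g,t) − Δ_{2^{−k+1}h}^m(g,t)] dh. 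-/
open MeasureTheory Real Function
open scoped ENNReal NNReal BigOperators

noncomputable section

/-- univariate m-th forward difference -/
def udiff (m : ℕ) (h : ℝ) (g : ℝ → ℂ) (t : ℝ) : ℂ :=
  ∑ j ∈ Finset.range (m + 1), ((-1 : ℂ)) ^ (m - j) * (m.choose j : ℂ) * g (t + j * h)

/-- `Ψ_0(t) = ∑_{u=1}^m (-1)^{m-u} binom(m,u) u^{-1} η(t/u)` -/
def psiZero (m : ℕ) (η : ℝ → ℂ) (t : ℝ) : ℂ :=
  ∑ u ∈ Finset.Icc 1 m, ((-1 : ℂ)) ^ (m - u) * (m.choose u : ℂ) * (u : ℂ)⁻¹ * η (t / u)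

/-- `Ψ(t) = Ψ_0(t) - (1/2) Ψ_0(t/2)` -/
def psiBig (m : ℕ) (η : ℝ → ℂ) (t : ℝ) : ℂ :=
  psiZero m η t - (1 / 2 : ℂ) * psiZero m η (t / 2)

/-- `Ψ_k(t) = 2^k Ψ(2^k t)` -/
def psiK (m : ℕ) (η : ℝ → ℂ) (k : ℕ) (t : ℝ) : ℂ :=
  (2 : ℂ) ^ k * psiBig m η ((2 : ℝ) ^ k * t)

/-- Lemma (convolution representation via differences, dyadic level `k ≥ 1`):
if `η` is continuous with `supp η ⊆ (-1,1)`, then for every bounded measurable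
`g`, every `k ≥ 1` and all `t`,
`(Ψ_k ∗ g)(t) = ∫_{-1}^1 η(-h) [Δ_{2^{-k}h}^m(g,t) - Δ_{2^{-k+1}h}^m(g,t)] dh`. -/
theorem convolution_difference_representation_dyadic
    (m : ℕ) (hm : 0 < m) (η : ℝ → ℂ) (hc : Continuous η)
    (hs : tsupport η ⊆ Set.Ioo (-1 : ℝ) 1) :
    ∀ g : ℝ → ℂ, Measurable g → (∃ Cg : ℝ, ∀ x, ‖g x‖ ≤ Cg) →
      ∀ k : ℕ, 1 ≤ k → ∀ t : ℝ,
      (∫ h : ℝ, psiK m η k h * g (t - h)) =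
        ∫ h in (-1 : ℝ)..1, η (-h) *
          (udiff m ((2 : ℝ) ^ (-(k : ℝ)) * h) g t -
            udiff m ((2 : ℝ) ^ (-(k : ℝ) + 1) * h) g t) := by
  rintro g hgm ⟨Cg, hCg⟩ k hk t
  -- basic facts about η
  have hηcs : HasCompactSupport η :=
    IsCompact.of_isClosed_subset isCompact_Icc (isClosed_tsupport η)
      (hs.trans Set.Ioo_subset_Icc_self)
  have hηint : Integrable η := hc.integrable_of_hasCompactSupport hηcs
  -- the dyadic scale
  set a : ℝ := (2 : ℝ) ^ (-(k : ℝ)) with ha_def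
  have ha : a = ((2 : ℝ) ^ k)⁻¹ := by
    rw [ha_def, ← Real.rpow_natCast 2 k, ← Real.rpow_neg (by norm_num)]
  have hapos : 0 < a := by rw [ha]; positivity
  have ha2 : (2 : ℝ) ^ (-(k : ℝ) + 1) = 2 * a := by
    rw [ha_def, Real.rpow_add (by norm_num), Real.rpow_one, mul_comm]
  have h2a : (2 : ℝ) ^ k * a = 1 := by rw [ha]; field_simp
  -- generic integrability
  have key : ∀ (c : ℝ), c ≠ 0 → ∀ p : ℝ → ℝ, Measurable p →
      Integrable (fun w => η (c * w) * g (p w)) := by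
    intro c hcne p hp
    have h1 : Integrable (fun w => η (c * w)) := hηint.comp_mul_left' hcne
    have h2 := Integrable.bdd_mul (μ := volume) h1
      ((hgm.comp hp).aestronglyMeasurable)
      (c := Cg) (Filter.Eventually.of_forall fun x => hCg (p x))
    simpa [mul_comm] using h2
  -- the basic integral
  set F : ℝ → ℂ := fun b => ∫ w : ℝ, η w * g (t - b * w) with hF_def
  -- change of variables for the LHS
  have covL : ∀ c : ℝ, 0 < c → (∫ h : ℝ, η (c⁻¹ * h) * g (t - h)) = (c : ℂ) * F c := by
    intro c hcpos
    have h1 := MeasureTheory.Measure.integral_comp_mul_left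
      (fun w => η w * g (t - c * w)) c⁻¹
    rw [inv_inv, abs_of_pos hcpos] at h1
    have h2 : (fun x : ℝ => η (c⁻¹ * x) * g (t - c * (c⁻¹ * x)))
        = fun x : ℝ => η (c⁻¹ * x) * g (t - x) := by
      funext x
      congr 2
      field_simp
    rw [h2] at h1
    rw [h1, hF_def, Complex.real_smul]
  -- change of variables for the RHS
  have covF : ∀ b : ℝ, (∫ h : ℝ, η (-h) * g (t + b * h)) = F b := by
    intro b
    have h1 := MeasureTheory.Measure.integral_comp_mul_left
      (fun w => η w * g (t - b * w)) (-1)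
    have h2 : (fun x : ℝ => η (-1 * x) * g (t - b * (-1 * x)))
        = fun x : ℝ => η (-x) * g (t + b * x) := by
      funext x; rw [neg_one_mul]; ring_nf
    rw [h2] at h1
    rw [h1, hF_def]
    norm_num
  have h2k : ((2:ℂ))^k ≠ 0 := pow_ne_zero _ two_ne_zero
  have haC : ((a : ℝ) : ℂ) = ((2:ℂ)^k)⁻¹ := by
    rw [ha]; push_cast; ring
  -- integrability instances
  have i1 : ∀ b : ℝ, b ≠ 0 → Integrable (fun h : ℝ => η (b * h) * g (t - h)) := by
    intro b hb
    exact key b hb (fun w => t - w) (measurable_const.sub measurable_id)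
  have i2 : ∀ b : ℝ, Integrable (fun h : ℝ => η (-h) * g (t + b * h)) := by
    intro b
    simpa [neg_one_mul] using key (-1) (by norm_num) (fun w => t + b * w)
      (measurable_const.add (measurable_const.mul measurable_id))
  -- LHS computation
  have hLHS : (∫ h : ℝ, psiK m η k h * g (t - h)) =
      ∑ u ∈ Finset.Icc 1 m, ((-1:ℂ)) ^ (m - u) * (m.choose u : ℂ) *
        (F ((u : ℝ) * a) - F ((u : ℝ) * (2 * a))) := by
    have hexp : (fun h : ℝ => psiK m η k h * g (t - h)) =
        fun h : ℝ => ∑ u ∈ Finset.Icc 1 m, ((-1:ℂ)) ^ (m - u) * (m.choose u : ℂ) * (u : ℂ)⁻¹ *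
          ((2:ℂ)^k * (η (((u:ℝ) * a)⁻¹ * h) * g (t - h)) -
           ((2:ℂ)^k * (1/2:ℂ)) * (η (((u:ℝ) * (2*a))⁻¹ * h) * g (t - h))) := by
      funext h
      have e1 : ∀ u : ℕ, ((2:ℝ)^k * h) / (u:ℝ) = ((u:ℝ) * a)⁻¹ * h := by
        intro u
        rw [mul_inv, ha, inv_inv]
        by_cases hu : (u:ℝ) = 0
        · simp [hu]
        · field_simp
          try ring
          try tauto
      have e2 : ∀ u : ℕ, (((2:ℝ)^k * h) / 2) / (u:ℝ) = ((u:ℝ) * (2*a))⁻¹ * h := by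
        intro u
        rw [mul_inv, mul_inv, ha, inv_inv]
        by_cases hu : (u:ℝ) = 0
        · simp [hu]
        · field_simp
          try ring
          try tauto
      simp only [psiK, psiBig, psiZero, e1, e2, mul_sub, sub_mul, Finset.mul_sum,
        Finset.sum_mul]
      rw [← Finset.sum_sub_distrib]
      exact Finset.sum_congr rfl fun u hu => by ring
    rw [hexp]
    have hint : ∀ u ∈ Finset.Icc 1 m, Integrable (fun h : ℝ =>
        ((-1:ℂ)) ^ (m - u) * (m.choose u : ℂ) * (u : ℂ)⁻¹ *
          ((2:ℂ)^k * (η (((u:ℝ) * a)⁻¹ * h) * g (t - h)) -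
           ((2:ℂ)^k * (1/2:ℂ)) * (η (((u:ℝ) * (2*a))⁻¹ * h) * g (t - h)))) := by
      intro u hu
      have hu1 : (1:ℕ) ≤ u := (Finset.mem_Icc.mp hu).1
      have hup : (0:ℝ) < (u:ℝ) := by exact_mod_cast hu1
      have hb1 : (((u:ℝ) * a)⁻¹ : ℝ) ≠ 0 := by positivity
      have hb2 : (((u:ℝ) * (2*a))⁻¹ : ℝ) ≠ 0 := by positivity
      exact (((i1 _ hb1).const_mul _).sub ((i1 _ hb2).const_mul _)).const_mul _
    rw [integral_finset_sum _ hint]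
    refine Finset.sum_congr rfl fun u hu => ?_
    have hu1 : (1:ℕ) ≤ u := (Finset.mem_Icc.mp hu).1
    have hup : (0:ℝ) < (u:ℝ) := by exact_mod_cast hu1
    have hu0 : ((u:ℕ):ℂ) ≠ 0 := Nat.cast_ne_zero.mpr (by omega)
    have hb1 : (0:ℝ) < (u:ℝ) * a := by positivity
    have hb2 : (0:ℝ) < (u:ℝ) * (2*a) := by positivity
    rw [integral_const_mul, integral_sub ((i1 _ (by positivity)).const_mul _)
      ((i1 _ (by positivity)).const_mul _), integral_const_mul, integral_const_mul,
      covL _ hb1, covL _ hb2]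
    push_cast
    rw [haC]
    field_simp
  -- RHS computation
  have hRHS : (∫ h in (-1:ℝ)..1, η (-h) *
        (udiff m (a * h) g t - udiff m ((2:ℝ) ^ (-(k : ℝ) + 1) * h) g t)) =
      ∑ u ∈ Finset.Icc 1 m, ((-1:ℂ)) ^ (m - u) * (m.choose u : ℂ) *
        (F ((u : ℝ) * a) - F ((u : ℝ) * (2 * a))) := by
    simp only [ha2]
    rw [intervalIntegral.integral_eq_integral_of_support_subset ?hsupp]
    case hsupp =>
      intro h hh
      have hne : η (-h) ≠ 0 := by
        intro h0
        apply hh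
        simp [h0]
      have hmem := hs (subset_tsupport η hne)
      exact ⟨by linarith [hmem.2], le_of_lt (by linarith [hmem.1])⟩
    have hexp2 : (fun h : ℝ => η (-h) * (udiff m (a * h) g t - udiff m ((2*a) * h) g t)) =
        fun h : ℝ => ∑ j ∈ Finset.range (m+1), ((-1:ℂ)) ^ (m - j) * (m.choose j : ℂ) *
          (η (-h) * g (t + ((j:ℝ) * a) * h) - η (-h) * g (t + ((j:ℝ) * (2*a)) * h)) := by
      funext h
      simp only [udiff, ← mul_assoc, ← Finset.sum_sub_distrib, Finset.mul_sum]
      exact Finset.sum_congr rfl fun j hj => by ring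
    rw [hexp2]
    have hint2 : ∀ j ∈ Finset.range (m+1), Integrable (fun h : ℝ =>
        ((-1:ℂ)) ^ (m - j) * (m.choose j : ℂ) *
          (η (-h) * g (t + ((j:ℝ) * a) * h) - η (-h) * g (t + ((j:ℝ) * (2*a)) * h))) :=
      fun j _ => ((i2 _).sub (i2 _)).const_mul _
    rw [integral_finset_sum _ hint2]
    have heval : ∀ j ∈ Finset.range (m+1),
        (∫ h : ℝ, ((-1:ℂ)) ^ (m - j) * (m.choose j : ℂ) *
          (η (-h) * g (t + ((j:ℝ) * a) * h) - η (-h) * g (t + ((j:ℝ) * (2*a)) * h))) =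
        ((-1:ℂ)) ^ (m - j) * (m.choose j : ℂ) * (F ((j:ℝ) * a) - F ((j:ℝ) * (2*a))) := by
      intro j _
      rw [integral_const_mul, integral_sub (i2 _) (i2 _), covF, covF]
    rw [Finset.sum_congr rfl heval]
    refine (Finset.sum_subset ?_ ?_).symm
    · intro x hx
      simp only [Finset.mem_Icc, Finset.mem_range] at *
      omega
    · intro x hx hnx
      have hx0 : x = 0 := by
        simp only [Finset.mem_Icc, Finset.mem_range] at *
        omega
      subst hx0
      simp
  rw [hLHS, ← hRHS]

end
end

section
/- Let m ∈ ℕ. Then there exists a constant C_m > 0 such that for every m-times continuously differentiable function f:ℝ→ℂ whose m-th derivative f^{(m)} is locally integrable, every h ∈ ℝ∖{0} and every t ∈ ℝ one has |Δ_h^m(f,t)| ≤ C_m |h|^m · (M f^{(m)})(t), where M denotes the Hardy–Littlewood maximal function. -/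
open MeasureTheory Real Function
open scoped ENNReal NNReal BigOperators

noncomputable section

/-- Hardy-Littlewood maximal function over bounded intervals containing `t` -/
def hlMax1 (g : ℝ → ℂ) (t : ℝ) : ℝ≥0∞ :=
  ⨆ (a : ℝ) (b : ℝ) (_ : a < b) (_ : t ∈ Set.Icc a b),
    (ENNReal.ofReal (b - a))⁻¹ * ∫⁻ y in Set.Icc a b, ENNReal.ofReal (‖g y‖)

lemma udiff_eq_fwdDiff (m : ℕ) (h : ℝ) (f : ℝ → ℂ) (t : ℝ) :
    udiff m h f t = (fwdDiff h)^[m] f t := by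
  rw [fwdDiff_iter_eq_sum_shift, udiff]
  refine Finset.sum_congr rfl fun j hj => ?_
  simp only [zsmul_eq_mul, nsmul_eq_mul]
  push_cast
  ring

lemma iteratedDeriv_sub' {n : ℕ} {f g : ℝ → ℂ} (hf : ContDiff ℝ n f) (hg : ContDiff ℝ n g)
    (x : ℝ) : iteratedDeriv n (f - g) x = iteratedDeriv n f x - iteratedDeriv n g x := by
  have hng : ContDiff ℝ n (-g) := hg.neg
  rw [sub_eq_add_neg, sub_eq_add_neg]
  rw [iteratedDeriv_eq_iteratedFDeriv, iteratedDeriv_eq_iteratedFDeriv,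
    iteratedDeriv_eq_iteratedFDeriv, iteratedFDeriv_add_apply hf.contDiffAt hng.contDiffAt]
  simp only [ContinuousMultilinearMap.add_apply, iteratedFDeriv_neg_apply,
    ContinuousMultilinearMap.neg_apply]

lemma key_s19 (n : ℕ) : ∀ f : ℝ → ℂ, ContDiff ℝ (n + 1 : ℕ) f → ∀ h t : ℝ,
    ‖(fwdDiff h)^[n + 1] f t‖ ≤ (n.factorial : ℝ) * |h| ^ n *
      ∫ y in Set.uIcc t (t + ((n : ℝ) + 1) * h), ‖iteratedDeriv (n + 1) f y‖ := by
  induction n with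
  | zero =>
    intro f hf h t
    have hone : (1 : WithTop ℕ∞) ≤ ((0 : ℕ) + 1 : ℕ) := by norm_num
    have hcont : Continuous (deriv f) := hf.continuous_deriv hone
    have hFTC : ∫ x in t..(t + h), deriv f x = f (t + h) - f t :=
      intervalIntegral.integral_deriv_eq_sub
        (fun x _ => (hf.differentiable (by norm_num)).differentiableAt)
        (hcont.intervalIntegrable _ _)
    have h1 : (fwdDiff h)^[0 + 1] f t = f (t + h) - f t := rfl
    rw [h1, ← hFTC]
    have hb1 : ‖∫ x in t..(t + h), deriv f x‖
        ≤ ∫ x in Set.uIoc t (t + h), ‖deriv f x‖ := by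
      exact
        intervalIntegral.norm_integral_le_integral_norm_uIoc (f := deriv f) (a := t) (b := t + h)
          (μ := volume)
    have hb2 : ∫ x in Set.uIoc t (t + h), ‖deriv f x‖
        ≤ ∫ x in Set.uIcc t (t + h), ‖deriv f x‖ := by
      apply setIntegral_mono_set
      · exact (continuous_norm.comp hcont).integrableOn_Icc
      · exact Filter.Eventually.of_forall fun x => norm_nonneg _
      · exact HasSubset.Subset.eventuallyLE Set.uIoc_subset_uIcc
    simp only [Nat.factorial_zero, Nat.cast_one, pow_zero, one_mul, iteratedDeriv_one,
      Nat.cast_zero, zero_add]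
    exact hb1.trans hb2
  | succ n IH =>
    intro f hf h t
    have hcd : ContDiff ℝ (n + 1 : ℕ) (fwdDiff h f) := by
      have h1 : ContDiff ℝ (n + 1 : ℕ) f := hf.of_le (by exact_mod_cast Nat.le_succ (n+1))
      have h2 : ContDiff ℝ (n + 1 : ℕ) (fun s : ℝ => f (s + h)) :=
        h1.comp (contDiff_id.add contDiff_const)
      exact h2.sub h1
    have hstep : (fwdDiff h)^[n + 1 + 1] f t = (fwdDiff h)^[n + 1] (fwdDiff h f) t := by
      rw [Function.iterate_succ_apply]
    rw [hstep]
    have hcast : ((n + 1 : ℕ) : ℝ) + 1 = (n : ℝ) + 1 + 1 := by push_cast; ring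
    rw [hcast]
    refine (IH (fwdDiff h f) hcd h t).trans ?_
    -- notation
    set g := iteratedDeriv (n + 1) f with hg
    set D := iteratedDeriv (n + 2) f with hD
    have hDcont : Continuous D := hf.continuous_iteratedDeriv _ le_rfl
    have hgdiff : Differentiable ℝ g :=
      hf.differentiable_iteratedDeriv (n + 1) (by exact_mod_cast Nat.lt_succ_self (n+1))
    have hderivg : deriv g = D := by rw [hg, hD, ← iteratedDeriv_succ]
    -- identify the (n+1)-st derivative of the forward difference
    have hid : ∀ y : ℝ, iteratedDeriv (n + 1) (fwdDiff h f) y = g (y + h) - g y := by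
      intro y
      have h1 : ContDiff ℝ (n + 1 : ℕ) f := hf.of_le (by exact_mod_cast Nat.le_succ (n+1))
      have h2 : ContDiff ℝ (n + 1 : ℕ) (fun s : ℝ => f (s + h)) :=
        h1.comp (contDiff_id.add contDiff_const)
      have e : fwdDiff h f = (fun s : ℝ => f (s + h)) - f := rfl
      rw [e, iteratedDeriv_sub' h2 h1 y]
      rw [iteratedDeriv_comp_add_const (n + 1) f h]
    -- pointwise bound on the big interval
    set I := Set.uIcc t (t + ((n : ℝ) + 1 + 1) * h) with hI
    set C0 := ∫ x in I, ‖D x‖ with hC0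
    have hC0nn : 0 ≤ C0 := setIntegral_nonneg measurableSet_uIcc
      (fun x _ => norm_nonneg _)
    have hptw : ∀ y ∈ Set.uIcc t (t + ((n : ℝ) + 1) * h),
        ‖iteratedDeriv (n + 1) (fwdDiff h f) y‖ ≤ C0 := by
      intro y hy
      have hsub : Set.uIcc y (y + h) ⊆ I := by
        have hn : (0:ℝ) ≤ (n : ℝ) := Nat.cast_nonneg n
        rw [Set.mem_uIcc] at hy
        have hy1 : y ∈ I := by
          rw [hI, Set.mem_uIcc]
          rcases le_or_gt 0 h with hh | hh
          · left; rcases hy with hy | hy <;> constructor <;> nlinarith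
          · right; rcases hy with hy | hy <;> constructor <;> nlinarith
        have hy2 : y + h ∈ I := by
          rw [hI, Set.mem_uIcc]
          rcases le_or_gt 0 h with hh | hh
          · left; rcases hy with hy | hy <;> constructor <;> nlinarith
          · right; rcases hy with hy | hy <;> constructor <;> nlinarith
        rw [hI]
        exact Set.uIcc_subset_uIcc hy1 hy2
      have hFTC : ∫ x in y..(y + h), D x = g (y + h) - g y := by
        rw [← hderivg]
        exact intervalIntegral.integral_deriv_eq_sub
          (fun x _ => hgdiff x)
          (by rw [hderivg]; exact hDcont.intervalIntegrable _ _)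
      rw [hid y, ← hFTC]
      have hb1 : ‖∫ x in y..(y + h), D x‖
          ≤ ∫ x in Set.uIoc y (y + h), ‖D x‖ := by
        exact
          intervalIntegral.norm_integral_le_integral_norm_uIoc (f := D) (a := y) (b := y + h)
            (μ := volume)
      refine hb1.trans ?_
      apply setIntegral_mono_set
      · rw [hI]; exact (continuous_norm.comp hDcont).integrableOn_Icc
      · exact Filter.Eventually.of_forall fun x => norm_nonneg _
      · exact HasSubset.Subset.eventuallyLE (Set.uIoc_subset_uIcc.trans hsub)
    -- integrate the pointwise bound
    have hcont2 : Continuous fun y => ‖iteratedDeriv (n + 1) (fwdDiff h f) y‖ :=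
      continuous_norm.comp (hcd.continuous_iteratedDeriv _ le_rfl)
    have hintle : ∫ y in Set.uIcc t (t + ((n : ℝ) + 1) * h),
        ‖iteratedDeriv (n + 1) (fwdDiff h f) y‖
        ≤ ∫ _y in Set.uIcc t (t + ((n : ℝ) + 1) * h), C0 := by
      apply setIntegral_mono_on
      · exact hcont2.integrableOn_Icc
      · exact integrableOn_const measure_Icc_lt_top.ne
      · exact measurableSet_uIcc
      · exact hptw
    have hvol : ∫ _y in Set.uIcc t (t + ((n : ℝ) + 1) * h), C0 = ((n : ℝ) + 1) * |h| * C0 := by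
      rw [setIntegral_const, Measure.real_def, Real.volume_interval, smul_eq_mul,
        ENNReal.toReal_ofReal (abs_nonneg _)]
      have : t + ((n : ℝ) + 1) * h - t = ((n : ℝ) + 1) * h := by ring
      rw [this, abs_mul]
      have : |(n : ℝ) + 1| = (n : ℝ) + 1 := abs_of_nonneg (by positivity)
      rw [this]
    calc (n.factorial : ℝ) * |h| ^ n *
          ∫ y in Set.uIcc t (t + ((n : ℝ) + 1) * h),
            ‖iteratedDeriv (n + 1) (fwdDiff h f) y‖
        ≤ (n.factorial : ℝ) * |h| ^ n * (((n : ℝ) + 1) * |h| * C0) := by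
          apply mul_le_mul_of_nonneg_left _ (by positivity)
          rw [← hvol]; exact hintle
      _ = ((n + 1).factorial : ℝ) * |h| ^ (n + 1) * C0 := by
          rw [Nat.factorial_succ]; push_cast; ring

/-- Lemma (maximal function bound for `m`-th differences): there is `C_m > 0`
such that `|Δ_h^m(f,t)| ≤ C_m |h|^m (M f^{(m)})(t)` for every `m`-times
continuously differentiable `f` with locally integrable `f^{(m)}`, every
`h ≠ 0` and every `t`. -/
theorem difference_maximal_bound (m : ℕ) (hm : 0 < m) :
    ∃ C : ℝ, 0 < C ∧ ∀ f : ℝ → ℂ, ContDiff ℝ m f →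
      LocallyIntegrable (iteratedDeriv m f) volume →
      ∀ h : ℝ, h ≠ 0 → ∀ t : ℝ,
      ENNReal.ofReal (‖udiff m h f t‖) ≤
        ENNReal.ofReal (C * |h| ^ m) * hlMax1 (iteratedDeriv m f) t := by
  obtain ⟨n, rfl⟩ : ∃ n, m = n + 1 := ⟨m - 1, by omega⟩
  refine ⟨(n + 1).factorial, by positivity, ?_⟩
  intro f hf _ h hne t
  have habs : (0:ℝ) < |h| := abs_pos.mpr hne
  set g := iteratedDeriv (n + 1) f with hgdef
  set a := t ⊓ (t + ((n : ℝ) + 1) * h) with ha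
  set b := t ⊔ (t + ((n : ℝ) + 1) * h) with hb
  have hne2 : t ≠ t + ((n : ℝ) + 1) * h := by
    intro hcontra
    have : ((n : ℝ) + 1) * h = 0 := by linarith [hcontra]
    rcases mul_eq_zero.mp this with h1 | h1
    · have : (0:ℝ) ≤ (n : ℝ) := Nat.cast_nonneg n; linarith
    · exact hne h1
  have hab : a < b := inf_lt_sup.mpr hne2
  have htm : t ∈ Set.Icc a b := ⟨inf_le_left, le_sup_left⟩
  have hIcc : Set.uIcc t (t + ((n : ℝ) + 1) * h) = Set.Icc a b := rfl
  have hba : b - a = ((n : ℝ) + 1) * |h| := by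
    rw [hb, ha, max_sub_min_eq_abs]
    have e1 : t + ((n : ℝ) + 1) * h - t = ((n : ℝ) + 1) * h := by ring
    rw [e1, abs_mul, abs_of_nonneg (by positivity : (0:ℝ) ≤ (n:ℝ) + 1)]
  have hgc : Continuous g := hf.continuous_iteratedDeriv _ le_rfl
  have hgint : IntegrableOn (fun y => ‖g y‖) (Set.Icc a b) volume :=
    (continuous_norm.comp hgc).integrableOn_Icc
  set L := ∫⁻ y in Set.Icc a b, ENNReal.ofReal (‖g y‖) with hL
  have hofL : ENNReal.ofReal (∫ y in Set.Icc a b, ‖g y‖) = L :=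
    ofReal_integral_eq_lintegral_ofReal hgint
      (Filter.Eventually.of_forall fun y => norm_nonneg _)
  -- key bound
  have hkey := key_s19 n f hf h t
  rw [← udiff_eq_fwdDiff, hIcc] at hkey
  have step1 : ENNReal.ofReal (‖udiff (n + 1) h f t‖) ≤
      ENNReal.ofReal ((n.factorial : ℝ) * |h| ^ n) * L := by
    refine (ENNReal.ofReal_le_ofReal hkey).trans ?_
    rw [ENNReal.ofReal_mul (by positivity), hofL]
  have hcoef : ENNReal.ofReal (((n + 1).factorial : ℝ) * |h| ^ (n + 1)) *
      (ENNReal.ofReal (b - a))⁻¹ = ENNReal.ofReal ((n.factorial : ℝ) * |h| ^ n) := by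
    rw [hba, ← div_eq_mul_inv, ← ENNReal.ofReal_div_of_pos (by positivity)]
    congr 1
    rw [Nat.factorial_succ]
    push_cast
    field_simp
    ring
  have step2 : (ENNReal.ofReal (b - a))⁻¹ * L ≤ hlMax1 g t := by
    rw [hlMax1]
    exact le_iSup_of_le a (le_iSup_of_le b (le_iSup_of_le hab (le_iSup_of_le htm le_rfl)))
  calc ENNReal.ofReal (‖udiff (n + 1) h f t‖)
      ≤ ENNReal.ofReal ((n.factorial : ℝ) * |h| ^ n) * L := step1
    _ = ENNReal.ofReal (((n + 1).factorial : ℝ) * |h| ^ (n + 1)) *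
        ((ENNReal.ofReal (b - a))⁻¹ * L) := by rw [← mul_assoc, hcoef]
    _ ≤ ENNReal.ofReal (((n + 1).factorial : ℝ) * |h| ^ (n + 1)) * hlMax1 g t :=
        mul_le_mul_right step2 _

end
end
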